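/- arXiv:0905.1053 — 2 statements merged into one kernel-verified Lean document; each statement's English description precedes it below -/
import Mathlib

section
/- Every exactly 2-edge-connected multigraph G can be obtained by a Robbins synthesis: there exists a sequence of multigraphs G_0, G_1, ..., G_l with G_0 a simple cycle, G_l = G, and each G_{i+1} obtained from G_i by a cycle addition (adding a path of new vertices whose two endpoints are attached to a single existing vertex of G_i, forming a new cycle meeting G_i in exactly one vertex). -/
/-! Basic theory of loopless undirected multigraphs. -/

/-- A loopless undirected multigraph on the vertex type `V`: a type of edges
together with a map assigning to each edge its unordered pair of (distinct)
endpoints.  All multigraphs are assumed to have finitely many edges. -/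
structure Multigraph (V : Type) where
  Edge : Type
  ends : Edge → Sym2 V
  loopless : ∀ e, ¬ (ends e).IsDiag
  edge_finite : Finite Edge

namespace Multigraph

open scoped Classical

variable {V : Type}

instance (G : Multigraph V) : Finite G.Edge := G.edge_finite

lemma exists_pair_eq {α : Type} (z : Sym2 α) : ∃ x y, z = s(x, y) := by
  induction z using Sym2.ind with
  | _ x y => exact ⟨x, y, rfl⟩

lemma map_not_isDiag {α β : Type} (f : α → β) (z : Sym2 α)
    (hf : ∀ x ∈ z, ∀ y ∈ z, f x = f y → x = y) (hz : ¬ z.IsDiag) :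
    ¬ (z.map f).IsDiag := by
  obtain ⟨x, y, rfl⟩ := exists_pair_eq z
  rw [Sym2.map_pair_eq, Sym2.mk_isDiag_iff]
  rw [Sym2.mk_isDiag_iff] at hz
  exact fun h => hz (hf x (by simp) y (by simp) h)

/-- Restrict an unordered pair, all of whose members satisfy `P`, to an
unordered pair of elements of the subtype `{x // P x}`. -/
noncomputable def sym2RestrictP {α : Type} (P : α → Prop) (z : Sym2 α) (h : ∀ x ∈ z, P x) :
    Sym2 {x : α // P x} :=
  z.map fun x =>
    if hx : P x then ⟨x, hx⟩
    else Classical.choice (by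
      obtain ⟨a, b, rfl⟩ := exists_pair_eq z
      exact ⟨⟨a, h a (by simp)⟩⟩)

lemma sym2RestrictP_not_isDiag {α : Type} (P : α → Prop) (z : Sym2 α) (h : ∀ x ∈ z, P x)
    (hz : ¬ z.IsDiag) : ¬ (sym2RestrictP P z h).IsDiag := by
  apply map_not_isDiag
  · intro a ha b hb hab
    rw [dif_pos (h a ha), dif_pos (h b hb)] at hab
    exact congrArg Subtype.val hab
  · exact hz

/-- Walks in a multigraph, recorded as alternating sequences of vertices and edges. -/
inductive Walk (G : Multigraph V) : V → V → Type
  | nil (v : V) : Walk G v v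
  | cons {u v w : V} (e : G.Edge) (he : G.ends e = s(u, v)) (p : Walk G v w) : Walk G u w

namespace Walk

variable {G : Multigraph V}

/-- The list of edges used by a walk. -/
def edges : ∀ {u v : V}, G.Walk u v → List G.Edge
  | _, _, nil _ => []
  | _, _, cons e _ p => e :: p.edges

/-- The list of vertices visited by a walk, in order. -/
def support : ∀ {u v : V}, G.Walk u v → List V
  | u, _, nil _ => [u]
  | u, _, cons _ _ p => u :: p.support

end Walk

/-- `G.HasEDP u v k` : there are (at least) `k` pairwise edge-disjoint paths
between `u` and `v` in `G` (formalized as `k` pairwise edge-disjoint trails,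
which is equivalent). -/
def HasEDP (G : Multigraph V) (u v : V) (k : ℕ) : Prop :=
  ∃ P : Fin k → G.Walk u v,
    (∀ i, (P i).edges.Nodup) ∧
    ∀ i j, i ≠ j → ∀ e, e ∈ (P i).edges → e ∉ (P j).edges

/-- `G` is `k`-edge-connected: between any two distinct vertices there are at
least `k` pairwise edge-disjoint paths. -/
def EdgeConnected (G : Multigraph V) (k : ℕ) : Prop :=
  Nontrivial V ∧ ∀ u v : V, u ≠ v → G.HasEDP u v k

/-- `G` is exactly `k`-edge-connected: between any two distinct vertices there
are exactly `k` pairwise edge-disjoint paths (at least `k`, and not `k + 1`). -/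
def ExactlyEdgeConnected (G : Multigraph V) (k : ℕ) : Prop :=
  Nontrivial V ∧ ∀ u v : V, u ≠ v → G.HasEDP u v k ∧ ¬ G.HasEDP u v (k + 1)

/-- The degree of a vertex: the number of edges incident to it. -/
noncomputable def degree (G : Multigraph V) (v : V) : ℕ :=
  {e : G.Edge | v ∈ G.ends e}.ncard

/-- Two vertices are adjacent if some edge joins them. -/
def Adj (G : Multigraph V) (u v : V) : Prop := ∃ e : G.Edge, G.ends e = s(u, v)

/-- `G` restricted to `S` is connected (witnessed by walks staying inside `S`). -/
def ConnectedOn (G : Multigraph V) (S : Set V) : Prop :=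
  ∀ u ∈ S, ∀ v ∈ S, ∃ p : G.Walk u v, ∀ x ∈ p.support, x ∈ S

/-- A multigraph is connected if it is nonempty and any two vertices are
joined by a walk. -/
def Connected (G : Multigraph V) : Prop :=
  Nonempty V ∧ ∀ u v : V, Nonempty (G.Walk u v)

/-- A multigraph is 2-vertex-connected (biconnected) if it is connected and
removing any single vertex leaves it connected. -/
def Biconnected (G : Multigraph V) : Prop :=
  G.Connected ∧ ∀ x : V, G.ConnectedOn {x}ᶜ

/-- A closed walk is a cycle if it repeats no edge, repeats no vertex except
the base point, and has length at least 2 (a double edge is a cycle of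
length 2; loops are excluded since multigraphs are loopless). -/
def IsCycle {G : Multigraph V} {v : V} (p : G.Walk v v) : Prop :=
  p.edges.Nodup ∧ p.support.tail.Nodup ∧ 2 ≤ p.edges.length

/-- A closed walk is chordless if no edge outside of it joins two of its
vertices (a parallel copy of one of its edges counts as a chord). -/
def IsChordless {G : Multigraph V} {v : V} (p : G.Walk v v) : Prop :=
  ∀ e : G.Edge, e ∉ p.edges → ∀ x y : V, G.ends e = s(x, y) →
    x ∈ p.support → y ∈ p.support → False

/-- `G.ReachAvoid S x y`: there is a walk from `x` to `y` avoiding the set `S`. -/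
def ReachAvoid (G : Multigraph V) (S : Set V) (x y : V) : Prop :=
  ∃ p : G.Walk x y, ∀ z ∈ p.support, z ∉ S

/-- The vertex sets of the connected components of `G ∖ S`.  For a cycle (or
any subgraph) `C`, the `C`-partition of the paper consists of `C` together
with these components; its size is the number of components. -/
def componentsAvoiding (G : Multigraph V) (S : Set V) : Set (Set V) :=
  {T | ∃ x, x ∉ S ∧ T = {y | G.ReachAvoid S x y}}

/-- Contract the (nonempty) vertex set `S` of `G` to a single new vertex
(`none`), deleting the edges inside `S`. -/
noncomputable def contractSet (G : Multigraph V) (S : Set V) :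
    Multigraph (Option {x : V // x ∉ S}) where
  Edge := {e : G.Edge // ¬ ∀ x ∈ G.ends e, x ∈ S}
  ends e := (G.ends e.1).map fun x => if h : x ∈ S then none else some ⟨x, h⟩
  loopless := by
    rintro ⟨e, he⟩ hd
    obtain ⟨x, y, hxy⟩ := exists_pair_eq (G.ends e)
    have hxyne : x ≠ y := by
      have h0 := G.loopless e
      rw [hxy, Sym2.mk_isDiag_iff] at h0
      exact h0
    have hor : x ∉ S ∨ y ∉ S := by
      by_contra hcon
      push_neg at hcon
      refine he fun z hz => ?_
      rw [hxy, Sym2.mem_iff] at hz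
      rcases hz with rfl | rfl
      exacts [hcon.1, hcon.2]
    simp only [hxy, Sym2.map_pair_eq, Sym2.mk_isDiag_iff] at hd
    rcases hor with hx | hy
    · rw [dif_neg hx] at hd
      by_cases hy : y ∈ S
      · rw [dif_pos hy] at hd; exact absurd hd (by simp)
      · rw [dif_neg hy] at hd
        exact hxyne (congrArg Subtype.val (Option.some_injective _ hd))
    · rw [dif_neg hy] at hd
      by_cases hx : x ∈ S
      · rw [dif_pos hx] at hd; exact absurd hd (by simp)
      · rw [dif_neg hx] at hd
        exact hxyne (congrArg Subtype.val (Option.some_injective _ hd))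
  edge_finite := by
    have := G.edge_finite
    exact inferInstance

/-- The subgraph of `G` induced by the vertex set `S`. -/
noncomputable def induce (G : Multigraph V) (S : Set V) : Multigraph ↥S where
  Edge := {e : G.Edge // ∀ x ∈ G.ends e, x ∈ S}
  ends e := sym2RestrictP (· ∈ S) (G.ends e.1) e.2
  loopless := fun e => sym2RestrictP_not_isDiag _ _ _ (G.loopless e.1)
  edge_finite := by
    have := G.edge_finite
    exact inferInstance

/-- Isomorphism of multigraphs. -/
structure Iso {V W : Type} (G : Multigraph V) (H : Multigraph W) where
  vmap : V ≃ W
  emap : G.Edge ≃ H.Edge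
  ends_vmap : ∀ e : G.Edge, H.ends (emap e) = (G.ends e).map vmap

/-- `G` is quasi `k`-regular: at most one vertex has degree different from `k`. -/
def QuasiRegular (G : Multigraph V) (k : ℕ) : Prop :=
  {v : V | G.degree v ≠ k}.Subsingleton

end Multigraph
namespace Multigraph

open scoped Classical

variable {V : Type}

/-- Block gluing: identify the vertex `u₁` of `G₁` with the vertex `u₂` of `G₂`
(the identified vertex is represented by `Sum.inl u₁`), keeping all edges. -/
noncomputable def blockGlue {V₁ V₂ : Type} (G₁ : Multigraph V₁) (G₂ : Multigraph V₂)
    (u₁ : V₁) (u₂ : V₂) : Multigraph (V₁ ⊕ {y : V₂ // y ≠ u₂}) where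
  Edge := G₁.Edge ⊕ G₂.Edge
  ends e :=
    match e with
    | .inl e => (G₁.ends e).map Sum.inl
    | .inr e => (G₂.ends e).map fun y => if h : y = u₂ then Sum.inl u₁ else Sum.inr ⟨y, h⟩
  loopless := by
    rintro (e | e) hd
    · exact map_not_isDiag _ _ (fun x _ y _ h => Sum.inl_injective h) (G₁.loopless e) hd
    · refine map_not_isDiag _ _ (fun x _ y _ h => ?_) (G₂.loopless e) hd
      by_cases hx : x = u₂ <;> by_cases hy : y = u₂
      · rw [hx, hy]
      · simp [hx, hy] at h
      · simp [hx, hy] at h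
      · simp [hx, hy] at h
        exact h
  edge_finite := by
    have := G₁.edge_finite; have := G₂.edge_finite
    exact inferInstance

/-- `k`-bridge addition: add a new vertex (`none`) joined to the existing
vertex `v` by `k` parallel edges. -/
def bridgeAdd (G : Multigraph V) (v : V) (k : ℕ) : Multigraph (Option V) where
  Edge := G.Edge ⊕ Fin k
  ends e :=
    match e with
    | .inl e => (G.ends e).map some
    | .inr _ => s(none, some v)
  loopless := by
    rintro (e | i) hd
    · exact map_not_isDiag _ _ (fun x _ y _ h => Option.some_injective _ h) (G.loopless e) hd
    · rw [Sym2.mk_isDiag_iff] at hd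
      exact absurd hd (by simp)
  edge_finite := by
    have := G.edge_finite
    exact inferInstance

end Multigraph
namespace Multigraph

open scoped Classical

variable {V : Type}

lemma other_ne {G : Multigraph V} {u : V} {e : G.Edge} (h : u ∈ G.ends e) :
    Sym2.Mem.other h ≠ u := by
  intro heq
  have hs := Sym2.other_spec h
  rw [heq] at hs
  have hl := G.loopless e
  rw [← hs, Sym2.mk_isDiag_iff] at hl
  exact hl rfl

/-- Vertex gluing: given vertices `u₁` of `G₁` and `u₂` of `G₂`, both of degree
`k` (witnessed by enumerations `ι₁`, `ι₂` of their incident edges), delete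
`u₁` and `u₂` and join, for each `i`, the other endpoint of the `i`-th edge at
`u₁` to the other endpoint of the `i`-th edge at `u₂`. -/
noncomputable def vertexGlue {V₁ V₂ : Type} (G₁ : Multigraph V₁) (G₂ : Multigraph V₂)
    (u₁ : V₁) (u₂ : V₂) {k : ℕ}
    (ι₁ : Fin k ≃ {e : G₁.Edge // u₁ ∈ G₁.ends e})
    (ι₂ : Fin k ≃ {e : G₂.Edge // u₂ ∈ G₂.ends e}) :
    Multigraph ({x : V₁ // x ≠ u₁} ⊕ {y : V₂ // y ≠ u₂}) where
  Edge := {e : G₁.Edge // u₁ ∉ G₁.ends e} ⊕ {e : G₂.Edge // u₂ ∉ G₂.ends e} ⊕ Fin k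
  ends e :=
    match e with
    | .inl e =>
        (sym2RestrictP (· ≠ u₁) (G₁.ends e.1) fun x hx hxe => e.2 (hxe ▸ hx)).map Sum.inl
    | .inr (.inl e) =>
        (sym2RestrictP (· ≠ u₂) (G₂.ends e.1) fun y hy hye => e.2 (hye ▸ hy)).map Sum.inr
    | .inr (.inr i) =>
        s(Sum.inl ⟨Sym2.Mem.other (ι₁ i).2, other_ne (ι₁ i).2⟩,
          Sum.inr ⟨Sym2.Mem.other (ι₂ i).2, other_ne (ι₂ i).2⟩)
  loopless := by
    rintro (e | e | i) hd
    · exact map_not_isDiag _ _ (fun x _ y _ h => Sum.inl_injective h)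
        (sym2RestrictP_not_isDiag _ _ _ (G₁.loopless e.1)) hd
    · exact map_not_isDiag _ _ (fun x _ y _ h => Sum.inr_injective h)
        (sym2RestrictP_not_isDiag _ _ _ (G₂.loopless e.1)) hd
    · rw [Sym2.mk_isDiag_iff] at hd
      exact absurd hd (by simp)
  edge_finite := by
    have := G₁.edge_finite; have := G₂.edge_finite
    exact inferInstance

/-- Cycle expansion: replace the vertex `u`, of degree `d` with incident edges
enumerated by `ι`, by a cycle on `d'` new vertices `u_0, …, u_{d'-1}`
(`2 ≤ d' ≤ d`); the `i`-th former edge at `u` is attached to `u_i` for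
`i < d' - 1` and to `u_{d'-1}` for `i ≥ d' - 1`, so each of `u_0, …, u_{d'-2}`
receives exactly one of them and `u_{d'-1}` receives the rest. -/
noncomputable def cycleExpand (G : Multigraph V) (u : V) {d d' : ℕ}
    (h2 : 2 ≤ d') (hdd : d' ≤ d)
    (ι : Fin d ≃ {e : G.Edge // u ∈ G.ends e}) :
    Multigraph ({x : V // x ≠ u} ⊕ Fin d') where
  Edge := {e : G.Edge // u ∉ G.ends e} ⊕ (Fin d ⊕ Fin d')
  ends e :=
    match e with
    | .inl e =>
        (sym2RestrictP (· ≠ u) (G.ends e.1) fun x hx hxe => e.2 (hxe ▸ hx)).map Sum.inl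
    | .inr (.inl i) =>
        s(Sum.inr ⟨min i.1 (d' - 1), by omega⟩,
          Sum.inl ⟨Sym2.Mem.other (ι i).2, other_ne (ι i).2⟩)
    | .inr (.inr j) =>
        s(Sum.inr j, Sum.inr ⟨(j.1 + 1) % d', Nat.mod_lt _ (by omega)⟩)
  loopless := by
    rintro (e | i | j) hd
    · exact map_not_isDiag _ _ (fun x _ y _ h => Sum.inl_injective h)
        (sym2RestrictP_not_isDiag _ _ _ (G.loopless e.1)) hd
    · rw [Sym2.mk_isDiag_iff] at hd
      exact absurd hd (by simp)
    · rw [Sym2.mk_isDiag_iff] at hd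
      have hj : j.1 < d' := j.2
      have := congrArg Fin.val (Sum.inr_injective hd)
      simp only at this
      rcases Nat.lt_or_ge (j.1 + 1) d' with h | h
      · rw [Nat.mod_eq_of_lt h] at this; omega
      · have hj1 : j.1 + 1 = d' := by omega
        rw [hj1, Nat.mod_self] at this; omega
  edge_finite := by
    have := G.edge_finite
    exact inferInstance

end Multigraph
namespace Multigraph

open scoped Classical

variable {V : Type}

/-- The edges of `G` crossing the vertex bipartition `⟨A, Aᶜ⟩`. -/
def cutEdges (G : Multigraph V) (A : Set V) : Set G.Edge :=
  {e | (∃ x ∈ G.ends e, x ∈ A) ∧ ∃ y ∈ G.ends e, y ∉ A}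

/-- The bipartition `⟨A, Aᶜ⟩` is a minimum edge cut of `G`: both sides are
nonempty and no other bipartition has fewer crossing edges. -/
def IsMinCut (G : Multigraph V) (A : Set V) : Prop :=
  A.Nonempty ∧ Aᶜ.Nonempty ∧
    ∀ B : Set V, B.Nonempty → Bᶜ.Nonempty →
      (G.cutEdges A).ncard ≤ (G.cutEdges B).ncard

/-- One side of a vertex splitting: keep the side `A` of the cut `⟨A, Aᶜ⟩`,
delete the other side, and reattach each cut edge to a single new vertex
(`none`). -/
noncomputable def splitSide (G : Multigraph V) (A : Set V) :
    Multigraph (Option {x : V // x ∈ A}) where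
  Edge := {e : G.Edge // ∀ x ∈ G.ends e, x ∈ A} ⊕ {e : G.Edge // e ∈ G.cutEdges A}
  ends e :=
    match e with
    | .inl e => (sym2RestrictP (· ∈ A) (G.ends e.1) e.2).map some
    | .inr e =>
        s(none, some ⟨Classical.choose e.2.1, (Classical.choose_spec e.2.1).2⟩)
  loopless := by
    rintro (e | e) hd
    · exact map_not_isDiag _ _ (fun x _ y _ h => Option.some_injective _ h)
        (sym2RestrictP_not_isDiag _ _ _ (G.loopless e.1)) hd
    · rw [Sym2.mk_isDiag_iff] at hd
      exact absurd hd (by simp)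
  edge_finite := by
    have := G.edge_finite
    exact inferInstance

/-- The dumbbell graph: two vertices joined by three parallel edges. -/
def dumbbell : Multigraph (Fin 2) where
  Edge := Fin 3
  ends _ := s(0, 1)
  loopless := fun _ h => absurd (Sym2.mk_isDiag_iff.mp h) (by decide)
  edge_finite := inferInstance

/-- `B` is (the vertex set of) a block of `G`: a maximal set of vertices
inducing a connected, 2-vertex-connected subgraph. -/
def IsBlock (G : Multigraph V) (B : Set V) : Prop :=
  (G.induce B).Biconnected ∧
    ∀ B' : Set V, B ⊆ B' → (G.induce B').Biconnected → B' = B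

/-- The set of double edges of `G`, as unordered pairs of distinct parallel
edges. -/
def doubleEdges (G : Multigraph V) : Set (Sym2 G.Edge) :=
  {z | ∃ e f : G.Edge, z = s(e, f) ∧ e ≠ f ∧ G.ends e = G.ends f}

/-- A collapsible cycle: a chordless, non-articulation cycle, all but at most
one of whose vertices have degree 3, whose contraction to a single vertex
yields an exactly 3-edge-connected multigraph. -/
def IsCollapsible {G : Multigraph V} {v : V} (p : G.Walk v v) : Prop :=
  IsCycle p ∧ IsChordless p ∧
    (G.componentsAvoiding {x | x ∈ p.support}).Subsingleton ∧
    {x : V | x ∈ p.support ∧ G.degree x ≠ 3}.Subsingleton ∧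
    (G.contractSet {x | x ∈ p.support}).ExactlyEdgeConnected 3

end Multigraph
namespace Multigraph

open scoped Classical

variable {V : Type}

/-- Smooth out the degree-two vertex `x` (whose two incident edges are
`e₁ = (x, a)` and `e₂ = (x, b)`): delete `x`, `e₁` and `e₂` and add a single
new edge joining `a` and `b`. -/
noncomputable def smoothAt {S : Set V} (H : Multigraph ↥S) (x a b : ↥S)
    (e₁ e₂ : H.Edge) (hne : e₁ ≠ e₂)
    (h₁ : H.ends e₁ = s(x, a)) (h₂ : H.ends e₂ = s(x, b))
    (hax : a ≠ x) (hbx : b ≠ x) (hab : a ≠ b)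
    (hdeg : ∀ e : H.Edge, x ∈ H.ends e → e = e₁ ∨ e = e₂) :
    Multigraph ↥(S \ {(x : V)}) where
  Edge := {e : H.Edge // e ≠ e₁ ∧ e ≠ e₂} ⊕ Unit
  ends e :=
    match e with
    | .inl e =>
        (sym2RestrictP (fun y : ↥S => y ≠ x) (H.ends e.1)
            (fun y hy hyx => by
              subst hyx
              rcases hdeg e.1 hy with h | h
              exacts [e.2.1 h, e.2.2 h])).map
          fun y => ⟨y.1.1, y.1.2, fun hh => y.2 (Subtype.ext hh)⟩
    | .inr _ =>
        s(⟨a.1, a.2, fun hh => hax (Subtype.ext hh)⟩,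
          ⟨b.1, b.2, fun hh => hbx (Subtype.ext hh)⟩)
  loopless := by
    rintro (e | e) hd
    · refine map_not_isDiag _ _ (fun y _ z _ h => ?_)
        (sym2RestrictP_not_isDiag _ _ _ (H.loopless e.1)) hd
      have hv := Subtype.ext_iff.mp h
      exact Subtype.ext (Subtype.ext hv)
    · rw [Sym2.mk_isDiag_iff] at hd
      have hv := Subtype.ext_iff.mp hd
      exact hab (Subtype.ext hv)
  edge_finite := by
    have := H.edge_finite
    exact inferInstance

/-- `SmoothSeq H K` : the multigraph `K` is obtained from `H` by a finite
sequence of smoothings of degree-two vertices. -/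
inductive SmoothSeq {V : Type} : ∀ {S T : Set V}, Multigraph ↥S → Multigraph ↥T → Prop
  | refl {S : Set V} (H : Multigraph ↥S) : SmoothSeq H H
  | step {S T : Set V} {H : Multigraph ↥S} {K : Multigraph ↥T}
      (x a b : ↥S) (e₁ e₂ : H.Edge) (hne : e₁ ≠ e₂)
      (h₁ : H.ends e₁ = s(x, a)) (h₂ : H.ends e₂ = s(x, b))
      (hax : a ≠ x) (hbx : b ≠ x) (hab : a ≠ b)
      (hdeg : ∀ e : H.Edge, x ∈ H.ends e → e = e₁ ∨ e = e₂) :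
      SmoothSeq (smoothAt H x a b e₁ e₂ hne h₁ h₂ hax hbx hab hdeg) K → SmoothSeq H K

/-- `G` is a 3-thick tree: it is obtained from a tree by replacing every tree
edge by three parallel edges. -/
def IsThreeThickTree (G : Multigraph V) : Prop :=
  ∃ T : SimpleGraph V, T.IsTree ∧
    ∃ f : G.Edge ≃ T.edgeSet × Fin 3, ∀ e : G.Edge, G.ends e = ((f e).1 : Sym2 V)

/-- The graphs obtainable from dumbbell graphs by cycle expansions and block
gluings (up to isomorphism). -/
inductive Synth3 : ∀ {V : Type}, Multigraph V → Prop
  | dumbbell : Synth3 dumbbell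
  | glue {V₁ V₂ : Type} {G₁ : Multigraph V₁} {G₂ : Multigraph V₂} (u₁ : V₁) (u₂ : V₂) :
      Synth3 G₁ → Synth3 G₂ → Synth3 (blockGlue G₁ G₂ u₁ u₂)
  | expand {V : Type} {G : Multigraph V} (u : V) {d d' : ℕ} (h2 : 2 ≤ d') (hdd : d' ≤ d)
      (ι : Fin d ≃ {e : G.Edge // u ∈ G.ends e}) :
      Synth3 G → Synth3 (G.cycleExpand u h2 hdd ι)
  | iso {V W : Type} {G : Multigraph V} {H : Multigraph W} :
      Synth3 G → Iso G H → Synth3 H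

/-- The graphs obtainable from 3-thick trees by block-respecting cycle
expansions (cycle expansions whose new cycle lies inside a single block of the
resulting graph), up to isomorphism. -/
inductive BRSynth : ∀ {V : Type}, Multigraph V → Prop
  | base {V : Type} {G : Multigraph V} : IsThreeThickTree G → BRSynth G
  | expand {V : Type} {G : Multigraph V} (u : V) {d d' : ℕ} (h2 : 2 ≤ d') (hdd : d' ≤ d)
      (ι : Fin d ≃ {e : G.Edge // u ∈ G.ends e})
      (hblock : ∃ B : Set ({x : V // x ≠ u} ⊕ Fin d'),
        (G.cycleExpand u h2 hdd ι).IsBlock B ∧ ∀ j : Fin d', Sum.inr j ∈ B) :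
      BRSynth G → BRSynth (G.cycleExpand u h2 hdd ι)
  | iso {V W : Type} {G : Multigraph V} {H : Multigraph W} :
      BRSynth G → Iso G H → BRSynth H

end Multigraph
namespace Multigraph

open scoped Classical

namespace Walk

variable {V : Type} {G : Multigraph V}

def append : ∀ {u v w : V}, G.Walk u v → G.Walk v w → G.Walk u w
  | _, _, _, .nil _, q => q
  | _, _, _, .cons e he p, q => .cons e he (append p q)

@[simp] lemma edges_append : ∀ {u v w : V} (p : G.Walk u v) (q : G.Walk v w),
    (p.append q).edges = p.edges ++ q.edges
  | _, _, _, .nil _, q => rfl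
  | _, _, _, .cons e he p, q => by
      simp [append, edges, edges_append p q]

def reverse : ∀ {u v : V}, G.Walk u v → G.Walk v u
  | _, _, .nil u => .nil u
  | _, _, .cons e he p => (reverse p).append (.cons e (by rw [he, Sym2.eq_swap]) (.nil _))

@[simp] lemma edges_reverse : ∀ {u v : V} (p : G.Walk u v),
    (p.reverse).edges = p.edges.reverse
  | _, _, .nil u => rfl
  | _, _, .cons e he p => by
      simp [reverse, edges, edges_reverse p]

@[simp] lemma start_mem_support {u v : V} (p : G.Walk u v) : u ∈ p.support := by
  cases p <;> simp [support]

lemma end_mem_support : ∀ {u v : V} (p : G.Walk u v), v ∈ p.support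
  | _, _, .nil u => by simp [support]
  | _, _, .cons e he p => by simp [support, end_mem_support p]

lemma edge_end_mem_support : ∀ {u v : V} (p : G.Walk u v) (f : G.Edge), f ∈ p.edges →
    ∀ z ∈ G.ends f, z ∈ p.support
  | _, _, .nil u => by simp [edges]
  | _, _, .cons e he p => by
      intro f hf z hz
      simp only [edges, List.mem_cons] at hf
      rcases hf with rfl | hf
      · rw [he] at hz
        rw [Sym2.mem_iff] at hz
        rcases hz with rfl | rfl
        · simp [support]
        · simp [support, end_mem_support p]
      · simp only [support, List.mem_cons]
        exact Or.inr (edge_end_mem_support p f hf z hz)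

lemma nodup_edges_of_nodup_support : ∀ {u v : V} (p : G.Walk u v),
    p.support.Nodup → p.edges.Nodup
  | _, _, .nil u => by simp [edges]
  | _, _, .cons e he p => by
      intro h
      simp only [support, List.nodup_cons] at h
      simp only [edges, List.nodup_cons]
      refine ⟨fun hmem => ?_, nodup_edges_of_nodup_support p h.2⟩
      exact h.1 (edge_end_mem_support p _ hmem _ (by rw [he]; simp))

lemma support_eq_cons {u v : V} (p : G.Walk u v) : p.support = u :: p.support.tail := by
  cases p <;> simp [support]

lemma exists_split : ∀ {u v : V} (p : G.Walk u v) (x : V), x ∈ p.support →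
    ∃ (q : G.Walk u x) (r : G.Walk x v),
      p.edges = q.edges ++ r.edges ∧ p.support = q.support ++ r.support.tail
  | _, _, .nil u, x, hx => by
      simp only [support, List.mem_singleton] at hx
      subst hx
      exact ⟨.nil x, .nil x, by simp [edges], by simp [support]⟩
  | u, w, .cons e he p, x, hx => by
      by_cases hxu : x = u
      · subst hxu
        exact ⟨.nil x, .cons e he p, by simp [edges], by simp [support]⟩
      · have hx' : x ∈ p.support := by
          simp only [support, List.mem_cons] at hx
          tauto
        obtain ⟨q', r', h1, h2⟩ := exists_split p x hx'
        exact ⟨.cons e he q', r', by simp [edges, h1], by simp [support, h2]⟩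

lemma exists_bypass : ∀ {u v : V} (p : G.Walk u v),
    ∃ p' : G.Walk u v, p'.support.Nodup ∧ (∀ z ∈ p'.support, z ∈ p.support) ∧
      (∀ f ∈ p'.edges, f ∈ p.edges)
  | _, _, .nil u => ⟨.nil u, by simp [support, edges], by simp, by simp [edges]⟩
  | u, w, .cons e he p => by
      obtain ⟨p', hnd, hsup, hed⟩ := exists_bypass p
      by_cases hu : u ∈ p'.support
      · obtain ⟨q, r, h1, h2⟩ := exists_split p' u hu
        rw [h2] at hnd
        rw [List.nodup_append] at hnd
        refine ⟨r, ?_, ?_, ?_⟩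
        · rw [support_eq_cons r, List.nodup_cons]
          exact ⟨fun hc => hnd.2.2 _ (end_mem_support q) _ hc rfl, hnd.2.1⟩
        · intro z hz
          rw [support_eq_cons r, List.mem_cons] at hz
          simp only [support, List.mem_cons]
          rcases hz with rfl | hz
          · exact Or.inl rfl
          · exact Or.inr (hsup z (by rw [h2, List.mem_append]; exact Or.inr hz))
        · intro f hf
          simp only [edges, List.mem_cons]
          exact Or.inr (hed f (by rw [h1, List.mem_append]; exact Or.inr hf))
      · exact ⟨.cons e he p', by simp [support, List.nodup_cons, hu, hnd],
          by intro z hz; simp only [support, List.mem_cons] at hz ⊢; tauto,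
          by intro f hf; simp only [edges, List.mem_cons] at hf ⊢; tauto⟩

end Walk

namespace Walk

variable {V : Type} {G : Multigraph V}

lemma edges_ne_nil {u v : V} (p : G.Walk u v) (h : u ≠ v) : p.edges ≠ [] := by
  cases p with
  | nil => exact absurd rfl h
  | cons e he p => simp [edges]

/-- The two arcs of the cycle `cons e he P` (with `P` a simple path) between any
two of its vertices: two edge-disjoint trails inside the cycle. -/
lemma cycle_trails {a b x y : V} {e : G.Edge} (he : G.ends e = s(a, b))
    (P : G.Walk b a) (hs : P.support.Nodup) (heP : e ∉ P.edges)
    (hx : x ∈ P.support) (hy : y ∈ P.support) (hxy : x ≠ y) :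
    ∃ t1 t2 : G.Walk x y, t1.edges.Nodup ∧ t2.edges.Nodup ∧
      (∀ f ∈ t1.edges, f ∉ t2.edges) ∧
      (∀ f ∈ t1.edges, f = e ∨ f ∈ P.edges) ∧ (∀ f ∈ t2.edges, f = e ∨ f ∈ P.edges) := by
  have hPnd : P.edges.Nodup := nodup_edges_of_nodup_support P hs
  obtain ⟨A, D, hE, hS⟩ := exists_split P x hx
  have hy' : y ∈ A.support ∨ y ∈ D.support.tail := by
    rw [hS, List.mem_append] at hy; exact hy
  rcases hy' with hyA | hyD
  · -- y on the first arc A : Walk b x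
    obtain ⟨B, C, hE2, _⟩ := exists_split A y hyA
    -- B : Walk b y, C : Walk y x
    have hnd : ((B.edges ++ C.edges) ++ D.edges).Nodup := by
      rw [← hE2, ← hE]; exact hPnd
    have heB : e ∉ B.edges := fun h => heP (by rw [hE, hE2]; simp [h])
    have heC : e ∉ C.edges := fun h => heP (by rw [hE, hE2]; simp [h])
    have heD : e ∉ D.edges := fun h => heP (by rw [hE]; simp [h])
    rw [List.nodup_append, List.nodup_append] at hnd
    obtain ⟨⟨hndB, hndC, hBC⟩, hndD, hBCD⟩ := hnd
    refine ⟨C.reverse, D.append (.cons e he B), ?_, ?_, ?_, ?_, ?_⟩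
    · rw [edges_reverse, List.nodup_reverse]; exact hndC
    · rw [edges_append]
      simp only [edges]
      rw [List.nodup_append]
      refine ⟨hndD, List.nodup_cons.mpr ⟨heB, hndB⟩, ?_⟩
      rintro f hfD _ hf2 rfl
      rcases List.mem_cons.mp hf2 with rfl | hfB
      · exact heD hfD
      · exact hBCD _ (List.mem_append.mpr (Or.inl hfB)) _ hfD rfl
    · intro f hf
      rw [edges_reverse, List.mem_reverse] at hf
      rw [edges_append]
      simp only [edges, List.mem_append, List.mem_cons, not_or]
      exact ⟨fun hfD => hBCD _ (List.mem_append.mpr (Or.inr hf)) _ hfD rfl,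
        fun hfe => heC (hfe ▸ hf), fun hfB => hBC _ hfB _ hf rfl⟩
    · intro f hf
      rw [edges_reverse, List.mem_reverse] at hf
      exact Or.inr (by rw [hE, hE2]; simp [hf])
    · intro f hf
      rw [edges_append] at hf
      simp only [edges, List.mem_append, List.mem_cons] at hf
      rcases hf with hfD | rfl | hfB
      · exact Or.inr (by rw [hE]; simp [hfD])
      · exact Or.inl rfl
      · exact Or.inr (by rw [hE, hE2]; simp [hfB])
  · -- y on the second arc D : Walk x a
    have hyD' : y ∈ D.support := by
      rw [support_eq_cons D]; exact List.mem_cons_of_mem _ hyD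
    obtain ⟨B, C, hE2, _⟩ := exists_split D y hyD'
    -- B : Walk x y, C : Walk y a
    have hnd : (A.edges ++ (B.edges ++ C.edges)).Nodup := by
      rw [← hE2, ← hE]; exact hPnd
    have heA : e ∉ A.edges := fun h => heP (by rw [hE]; simp [h])
    have heB : e ∉ B.edges := fun h => heP (by rw [hE, hE2]; simp [h])
    have heC : e ∉ C.edges := fun h => heP (by rw [hE, hE2]; simp [h])
    rw [List.nodup_append, List.nodup_append] at hnd
    obtain ⟨hndA, ⟨hndB, hndC, hBC⟩, hABC⟩ := hnd
    have he' : G.ends e = s(b, a) := by rw [he]; exact Sym2.eq_swap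
    refine ⟨B, A.reverse.append (.cons e he' C.reverse), ?_, ?_, ?_, ?_, ?_⟩
    · exact hndB
    · rw [edges_append]
      simp only [edges, edges_reverse]
      rw [List.nodup_append]
      refine ⟨List.nodup_reverse.mpr hndA,
        List.nodup_cons.mpr ⟨by rw [List.mem_reverse]; exact heC, List.nodup_reverse.mpr hndC⟩, ?_⟩
      rintro f hfA _ hf2 rfl
      rw [List.mem_reverse] at hfA
      rcases List.mem_cons.mp hf2 with rfl | hfC
      · exact heA hfA
      · rw [List.mem_reverse] at hfC
        exact hABC _ hfA _ (List.mem_append.mpr (Or.inr hfC)) rfl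
    · intro f hf
      rw [edges_append]
      simp only [edges, edges_reverse, List.mem_append, List.mem_cons, List.mem_reverse, not_or]
      exact ⟨fun hfA => hABC _ hfA _ (List.mem_append.mpr (Or.inl hf)) rfl,
        fun hfe => heB (hfe ▸ hf), fun hfC => hBC _ hf _ hfC rfl⟩
    · intro f hf
      exact Or.inr (by rw [hE, hE2]; simp [hf])
    · intro f hf
      rw [edges_append] at hf
      simp only [edges, edges_reverse, List.mem_append, List.mem_cons, List.mem_reverse] at hf
      rcases hf with hfA | rfl | hfC
      · exact Or.inr (by rw [hE]; simp [hfA])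
      · exact Or.inl rfl
      · exact Or.inr (by rw [hE, hE2]; simp [hfC])

/-- Extract the prefix of a walk up to the first vertex belonging to `S`. -/
lemma exists_prefix_until (S : Set V) : ∀ {u v : V} (p : G.Walk u v), v ∈ S → u ∉ S →
    ∃ (c : V) (q : G.Walk u c), c ∈ S ∧ (∀ f ∈ q.edges, f ∈ p.edges) ∧
      (∀ z ∈ q.support, z ∈ S → z = c)
  | _, _, .nil _, hv, hu => absurd hv hu
  | u, v, .cons (v := m) e he p, hv, hu => by
      by_cases hm : m ∈ S
      · refine ⟨m, .cons e he (.nil m), hm, by simp [edges], ?_⟩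
        intro z hz hzS
        simp only [support, List.mem_cons, List.mem_singleton] at hz
        rcases hz with rfl | rfl | h
        · exact absurd hzS hu
        · rfl
        · exact absurd h (by simp)
      · obtain ⟨c, q, hc, hqe, hqs⟩ := exists_prefix_until S p hv hm
        refine ⟨c, .cons e he q, hc, ?_, ?_⟩
        · intro f hf
          simp only [edges, List.mem_cons] at hf ⊢
          tauto
        · intro z hz hzS
          simp only [support, List.mem_cons] at hz
          rcases hz with rfl | hz
          · exact absurd hzS hu
          · exact hqs z hz hzS

end Walk

variable {V : Type} {G : Multigraph V}

/-- Two edge-disjoint trails from `p` to `r` using only edges in `B`. -/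
def TwoTrails (G : Multigraph V) (B : Set G.Edge) (p r : V) : Prop :=
  ∃ t1 t2 : G.Walk p r, t1.edges.Nodup ∧ t2.edges.Nodup ∧
    (∀ f ∈ t1.edges, f ∉ t2.edges) ∧ (∀ f ∈ t1.edges, f ∈ B) ∧ (∀ f ∈ t2.edges, f ∈ B)

/-- The invariant of the synthesis: `B` is the edge set induced by `A`, and any
two vertices of `A` are joined by two edge-disjoint trails inside `B`. -/
def GoodPair (G : Multigraph V) (A : Set V) (B : Set G.Edge) : Prop :=
  A.Nonempty ∧ B = {f | ∀ z ∈ G.ends f, z ∈ A} ∧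
    ∀ p ∈ A, ∀ r ∈ A, p ≠ r → G.TwoTrails B p r

lemma twoTrails_mono {B B' : Set G.Edge} (h : ∀ f ∈ B, f ∈ B') {p r : V}
    (ht : G.TwoTrails B p r) : G.TwoTrails B' p r := by
  obtain ⟨t1, t2, h1, h2, h3, h4, h5⟩ := ht
  exact ⟨t1, t2, h1, h2, h3, fun f hf => h f (h4 f hf), fun f hf => h _ (h5 f hf)⟩

lemma twoTrails_comp {B1 B2 : Set G.Edge} {p m r : V}
    (h1 : G.TwoTrails B1 p m) (h2 : G.TwoTrails B2 m r)
    (hdisj : ∀ f ∈ B1, f ∉ B2) : G.TwoTrails (B1 ∪ B2) p r := by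
  obtain ⟨s1, s2, hs1, hs2, hs12, hs1B, hs2B⟩ := h1
  obtain ⟨o1, o2, ho1, ho2, ho12, ho1B, ho2B⟩ := h2
  refine ⟨s1.append o1, s2.append o2, ?_, ?_, ?_, ?_, ?_⟩
  · rw [Walk.edges_append, List.nodup_append]
    exact ⟨hs1, ho1, fun f hf1 g hf2 hfg => hdisj f (hs1B f hf1) (ho1B f (hfg ▸ hf2))⟩
  · rw [Walk.edges_append, List.nodup_append]
    exact ⟨hs2, ho2, fun f hf1 g hf2 hfg => hdisj f (hs2B f hf1) (ho2B f (hfg ▸ hf2))⟩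
  · intro f hf
    rw [Walk.edges_append, List.mem_append] at hf ⊢
    push_neg
    rcases hf with hf | hf
    · exact ⟨hs12 f hf, fun h => hdisj f (hs1B f hf) (ho2B f h)⟩
    · exact ⟨fun h => hdisj f (hs2B f h) (ho1B f hf), ho12 f hf⟩
  · intro f hf
    rw [Walk.edges_append, List.mem_append] at hf
    rcases hf with hf | hf
    · exact Or.inl (hs1B f hf)
    · exact Or.inr (ho1B f hf)
  · intro f hf
    rw [Walk.edges_append, List.mem_append] at hf
    rcases hf with hf | hf
    · exact Or.inl (hs2B f hf)
    · exact Or.inr (ho2B f hf)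

lemma hasEDP_of_three {x y : V} (t1 t2 t3 : G.Walk x y)
    (h1 : t1.edges.Nodup) (h2 : t2.edges.Nodup) (h3 : t3.edges.Nodup)
    (d12 : ∀ f ∈ t1.edges, f ∉ t2.edges) (d13 : ∀ f ∈ t1.edges, f ∉ t3.edges)
    (d23 : ∀ f ∈ t2.edges, f ∉ t3.edges) : G.HasEDP x y 3 := by
  refine ⟨![t1, t2, t3], ?_, ?_⟩
  · intro i; fin_cases i <;> assumption
  · intro i j hij f hfi hfj
    fin_cases i <;> fin_cases j <;>
      simp only [Matrix.cons_val_zero, Matrix.cons_val_one, Matrix.head_cons,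
        Matrix.cons_val_two, Matrix.tail_cons] at hfi hfj <;>
      first
        | exact hij rfl
        | exact d12 f hfi hfj
        | exact d12 f hfj hfi
        | exact d13 f hfi hfj
        | exact d13 f hfj hfi
        | exact d23 f hfi hfj
        | exact d23 f hfj hfi

lemma finite_vertex (hG : G.ExactlyEdgeConnected 2) : Finite V := by
  obtain ⟨⟨x, y, hxy⟩, h2⟩ := hG
  have hmem : ∀ v : V, ∃ e : G.Edge, v ∈ G.ends e := by
    intro v
    have hw : ∃ w, v ≠ w := by
      rcases eq_or_ne v x with rfl | h
      · exact ⟨y, hxy⟩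
      · exact ⟨x, h⟩
    obtain ⟨w, hw⟩ := hw
    obtain ⟨P, -, -⟩ := (h2 v w hw).1
    cases hP : P 0 with
    | nil => exact absurd rfl hw
    | cons e he p => exact ⟨e, by rw [he]; simp⟩
  have hfin : (Set.univ : Set V).Finite := by
    have hsub : (Set.univ : Set V) ⊆ ⋃ e : G.Edge, {z | z ∈ G.ends e} := by
      intro v _
      obtain ⟨e, he⟩ := hmem v
      exact Set.mem_iUnion.mpr ⟨e, he⟩
    refine Set.Finite.subset (Set.finite_iUnion fun e => ?_) hsub
    obtain ⟨p, q, hpq⟩ := exists_pair_eq (G.ends e)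
    have : {z | z ∈ G.ends e} = {p, q} := by
      ext z; rw [hpq]; simp [Sym2.mem_iff]
    rw [this]
    exact (Set.finite_singleton q).insert p
  rwa [Set.finite_univ_iff] at hfin

lemma exists_crossing (A : Set V) : ∀ {u w : V}, G.Walk u w → u ∈ A → w ∉ A →
    ∃ (e : G.Edge) (a b : V), G.ends e = s(a, b) ∧ a ∈ A ∧ b ∉ A
  | _, _, .nil _, hu, hw => absurd hu hw
  | u, w, .cons (v := m) e he p, hu, hw => by
      by_cases hm : m ∈ A
      · exact exists_crossing A p hm hw
      · exact ⟨e, u, m, he, hu, hm⟩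

/-- The vertex/edge sets of a cycle `cons e he P0` form a good pair. -/
lemma good_cycle (hG : G.ExactlyEdgeConnected 2) {a b : V} {e : G.Edge}
    (he : G.ends e = s(a, b)) (P0 : G.Walk b a)
    (hnd : P0.support.Nodup) (heP : e ∉ P0.edges) :
    G.GoodPair {x | x ∈ (Walk.cons e he P0).support} {f | f ∈ (Walk.cons e he P0).edges} := by
  have haP : a ∈ P0.support := Walk.end_mem_support P0
  have hsupp : ∀ {x : V}, x ∈ (Walk.cons e he P0).support ↔ x ∈ P0.support := by
    intro x
    simp only [Walk.support, List.mem_cons]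
    constructor
    · rintro (rfl | h); exacts [haP, h]
    · exact Or.inr
  have hedge : ∀ {f : G.Edge}, f ∈ (Walk.cons e he P0).edges ↔ (f = e ∨ f ∈ P0.edges) := by
    intro f; simp [Walk.edges]
  have hcyc : ∀ x y, x ∈ P0.support → y ∈ P0.support → x ≠ y →
      G.TwoTrails {f | f ∈ (Walk.cons e he P0).edges} x y := by
    intro x y hx hy hxy
    obtain ⟨t1, t2, h1, h2, h3, h4, h5⟩ := Walk.cycle_trails he P0 hnd heP hx hy hxy
    exact ⟨t1, t2, h1, h2, h3, fun f hf => hedge.mpr (h4 f hf), fun f hf => hedge.mpr (h5 f hf)⟩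
  refine ⟨⟨a, hsupp.mpr haP⟩, ?_, ?_⟩
  · ext f
    simp only [Set.mem_setOf_eq]
    constructor
    · intro hf z hz
      exact Walk.edge_end_mem_support _ f hf z hz
    · intro hf
      by_contra hfq
      obtain ⟨x, y, hxy⟩ := exists_pair_eq (G.ends f)
      have hxyne : x ≠ y := by
        have := G.loopless f; rw [hxy, Sym2.mk_isDiag_iff] at this; exact this
      have hx : x ∈ P0.support := hsupp.mp (hf x (by rw [hxy]; simp))
      have hy : y ∈ P0.support := hsupp.mp (hf y (by rw [hxy]; simp))
      obtain ⟨t1, t2, h1, h2, h3, h4, h5⟩ := hcyc x y hx hy hxyne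
      have hcontra := (hG.2 x y hxyne).2
      rw [(by norm_num : (2:ℕ) + 1 = 3)] at hcontra
      apply hcontra
      refine hasEDP_of_three t1 t2 (.cons f hxy (.nil y)) h1 h2 (by simp [Walk.edges]) h3 ?_ ?_
      · intro g hg
        simp only [Walk.edges, List.mem_singleton, List.mem_cons, List.not_mem_nil, or_false]
        rintro rfl
        exact hfq (h4 g hg)
      · intro g hg
        simp only [Walk.edges, List.mem_singleton, List.mem_cons, List.not_mem_nil, or_false]
        rintro rfl
        exact hfq (h5 g hg)
  · intro p hp r hr hpr
    exact hcyc p r (hsupp.mp hp) (hsupp.mp hr) hpr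

/-- The main step: a good pair not yet covering everything can be extended by a
cycle addition. -/
lemma good_step (hG : G.ExactlyEdgeConnected 2) {A : Set V} {B : Set G.Edge}
    (hA : G.GoodPair A B) (hne : A ≠ Set.univ) :
    ∃ (a : V) (q : G.Walk a a), IsCycle q ∧ a ∈ A ∧
      (∀ x ∈ q.support, x ≠ a → x ∉ A) ∧ (∃ z ∈ q.support, z ∉ A) ∧
      G.GoodPair (A ∪ {x | x ∈ q.support}) (B ∪ {f | f ∈ q.edges}) := by
  obtain ⟨hAne, hBind, hTT⟩ := hA
  obtain ⟨v0, hv0⟩ := hAne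
  obtain ⟨x0, hx0⟩ : ∃ x0, x0 ∉ A := by
    by_contra h
    push_neg at h
    exact hne (Set.eq_univ_iff_forall.mpr h)
  have hvx : v0 ≠ x0 := fun h => hx0 (h ▸ hv0)
  obtain ⟨W, -, -⟩ := (hG.2 v0 x0 hvx).1
  obtain ⟨e, a, b, he, haA, hbA⟩ := exists_crossing A (W 0) hv0 hx0
  have hab : a ≠ b := by
    have := G.loopless e
    rw [he, Sym2.mk_isDiag_iff] at this
    exact this
  obtain ⟨T, hTnd, hTdisj⟩ := (hG.2 a b hab).1
  have hPick : ∃ t : G.Walk a b, t.edges.Nodup ∧ e ∉ t.edges := by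
    by_cases h0 : e ∈ (T 0).edges
    · exact ⟨T 1, hTnd 1, fun h => hTdisj 0 1 (by decide) e h0 h⟩
    · exact ⟨T 0, hTnd 0, h0⟩
  obtain ⟨t, htnd, hte⟩ := hPick
  have hterev : ∀ f ∈ t.reverse.edges, f ∈ t.edges := by
    intro f hf
    rwa [Walk.edges_reverse, List.mem_reverse] at hf
  obtain ⟨c, q1, hcA, hq1e, hq1s⟩ := Walk.exists_prefix_until A t.reverse haA hbA
  obtain ⟨P0, hP0nd, hP0s, hP0e⟩ := Walk.exists_bypass q1
  have hP0e' : ∀ f ∈ P0.edges, f ∈ t.edges := fun f hf => hterev f (hq1e f (hP0e f hf))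
  have heP0 : e ∉ P0.edges := fun h => hte (hP0e' e h)
  have hP0s' : ∀ z ∈ P0.support, z ∈ A → z = c := fun z hz => hq1s z (hP0s z hz)
  have hP0B : ∀ f ∈ P0.edges, f ∉ B := by
    intro f hf hfB
    rw [hBind] at hfB
    obtain ⟨p', q', hpq⟩ := exists_pair_eq (G.ends f)
    have h1 : p' ∈ P0.support := Walk.edge_end_mem_support P0 f hf p' (by rw [hpq]; simp)
    have h2 : q' ∈ P0.support := Walk.edge_end_mem_support P0 f hf q' (by rw [hpq]; simp)
    have hp' : p' = c := hP0s' p' h1 (hfB p' (by rw [hpq]; simp))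
    have hq' : q' = c := hP0s' q' h2 (hfB q' (by rw [hpq]; simp))
    have := G.loopless f
    rw [hpq, Sym2.mk_isDiag_iff] at this
    exact this (hp'.trans hq'.symm)
  have heB : e ∉ B := by
    intro hB
    rw [hBind] at hB
    exact hbA (hB b (by rw [he]; simp))
  by_cases hca : c = a
  swap
  · -- c ≠ a : contradiction with exact 2-edge-connectivity
    exfalso
    have hac : a ≠ c := fun h => hca h.symm
    obtain ⟨t1, t2, h1nd, h2nd, h12, h1B, h2B⟩ := hTT a haA c hcA hac
    have hcontra := (hG.2 a c hac).2
    rw [(by norm_num : (2:ℕ) + 1 = 3)] at hcontra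
    apply hcontra
    refine hasEDP_of_three t1 t2 (.cons e he P0) h1nd h2nd ?_ h12 ?_ ?_
    · simp only [Walk.edges, List.nodup_cons]
      exact ⟨heP0, Walk.nodup_edges_of_nodup_support P0 hP0nd⟩
    · intro g hg
      simp only [Walk.edges, List.mem_cons, not_or]
      exact ⟨fun hge => heB (hge ▸ h1B g hg), fun hgP => hP0B g hgP (h1B g hg)⟩
    · intro g hg
      simp only [Walk.edges, List.mem_cons, not_or]
      exact ⟨fun hge => heB (hge ▸ h2B g hg), fun hgP => hP0B g hgP (h2B g hg)⟩
  · -- c = a : we found our cycle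
    subst hca
    have hba : b ≠ c := fun h => hbA (h ▸ hcA)
    refine ⟨c, .cons e he P0, ?_, hcA, ?_, ?_, ?_⟩
    · refine ⟨?_, ?_, ?_⟩
      · simp only [Walk.edges, List.nodup_cons]
        exact ⟨heP0, Walk.nodup_edges_of_nodup_support P0 hP0nd⟩
      · simpa only [Walk.support, List.tail_cons] using hP0nd
      · simp only [Walk.edges, List.length_cons]
        have := Walk.edges_ne_nil P0 hba
        have : 0 < P0.edges.length := List.length_pos_iff.mpr this
        omega
    · intro x hx hxc
      simp only [Walk.support, List.mem_cons] at hx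
      rcases hx with rfl | hx
      · exact absurd rfl hxc
      · exact fun hxA => hxc (hP0s' x hx hxA)
    · exact ⟨b, by simp [Walk.support, Walk.start_mem_support], hbA⟩
    · -- the new pair is good
      have hgc := good_cycle hG he P0 hP0nd heP0
      obtain ⟨-, hgcB, hgcTT⟩ := hgc
      have hcP : c ∈ P0.support := Walk.end_mem_support P0
      have hsupp : ∀ {x : V}, x ∈ (Walk.cons e he P0).support ↔ x ∈ P0.support := by
        intro x
        simp only [Walk.support, List.mem_cons]
        exact ⟨fun h => h.elim (fun h => h ▸ hcP) id, Or.inr⟩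
      have hQB : ∀ f ∈ (Walk.cons e he P0).edges, f ∉ B := by
        intro f hf
        simp only [Walk.edges, List.mem_cons] at hf
        rcases hf with rfl | hf
        · exact heB
        · exact hP0B f hf
      have hBQ : ∀ f ∈ B, f ∉ ({f | f ∈ (Walk.cons e he P0).edges} : Set G.Edge) :=
        fun f hf hq => hQB f hq hf
      refine ⟨⟨v0, Or.inl hv0⟩, ?_, ?_⟩
      · -- induced edge set
        ext f
        simp only [Set.mem_union, Set.mem_setOf_eq]
        constructor
        · intro hf z hz
          rcases hf with hf | hf
          · exact Or.inl (by rw [hBind] at hf; exact hf z hz)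
          · exact Or.inr (Walk.edge_end_mem_support _ f hf z hz)
        · intro hf
          by_contra hnf
          push_neg at hnf
          obtain ⟨hfB, hfQ⟩ := hnf
          obtain ⟨x, y, hxy⟩ := exists_pair_eq (G.ends f)
          have hxyne : x ≠ y := by
            have := G.loopless f
            rw [hxy, Sym2.mk_isDiag_iff] at this
            exact this
          have hx : x ∈ A ∨ x ∈ (Walk.cons e he P0).support := hf x (by rw [hxy]; simp)
          have hy : y ∈ A ∨ y ∈ (Walk.cons e he P0).support := hf y (by rw [hxy]; simp)
          -- helper: contradiction when one endpoint is a new vertex and the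
          -- other an old vertex not on the cycle
          have key : ∀ x' y', G.ends f = s(x', y') → x' ∈ P0.support → x' ∉ A →
              y' ∈ A → y' ∉ P0.support → False := by
            intro x' y' hf' hx's hx'A hy'A hy's
            have hx'c : x' ≠ c := fun h => hx'A (h ▸ hcA)
            have hy'c : y' ≠ c := fun h => hy's (h ▸ hcP)
            have hx'y' : x' ≠ y' := fun h => hx'A (h ▸ hy'A)
            obtain ⟨s1, s2, hs1, hs2, hs12, hs1Q, hs2Q⟩ :=
              Walk.cycle_trails he P0 hP0nd heP0 hx's hcP hx'c
            obtain ⟨o1, o2, ho1, ho2, ho12, ho1B, ho2B⟩ := hTT c hcA y' hy'A (fun h => hy'c h.symm)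
            have hsQ : ∀ {g}, (g = e ∨ g ∈ P0.edges) → g ∈ (Walk.cons e he P0).edges := by
              intro g hg
              simp only [Walk.edges, List.mem_cons]
              exact hg
            have hcontra := (hG.2 x' y' hx'y').2
            rw [(by norm_num : (2:ℕ) + 1 = 3)] at hcontra
            apply hcontra
            refine hasEDP_of_three (s1.append o1) (s2.append o2) (.cons f hf' (.nil y'))
              ?_ ?_ ?_ ?_ ?_ ?_
            · rw [Walk.edges_append, List.nodup_append]
              exact ⟨hs1, ho1, fun g hg1 g' hg2 hgg => hQB g (hsQ (hs1Q g hg1)) (ho1B g (hgg ▸ hg2))⟩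
            · rw [Walk.edges_append, List.nodup_append]
              exact ⟨hs2, ho2, fun g hg1 g' hg2 hgg => hQB g (hsQ (hs2Q g hg1)) (ho2B g (hgg ▸ hg2))⟩
            · simp [Walk.edges]
            · intro g hg
              rw [Walk.edges_append, List.mem_append] at hg ⊢
              push_neg
              rcases hg with hg | hg
              · exact ⟨hs12 g hg, fun h => hQB g (hsQ (hs1Q g hg)) (ho2B g h)⟩
              · exact ⟨fun h => hQB g (hsQ (hs2Q g h)) (ho1B g hg), ho12 g hg⟩
            · intro g hg
              simp only [Walk.edges, List.mem_cons, List.not_mem_nil, or_false]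
              rintro rfl
              rw [Walk.edges_append, List.mem_append] at hg
              rcases hg with hg | hg
              · exact hfQ (hsQ (hs1Q g hg))
              · exact hfB (ho1B g hg)
            · intro g hg
              simp only [Walk.edges, List.mem_cons, List.not_mem_nil, or_false]
              rintro rfl
              rw [Walk.edges_append, List.mem_append] at hg
              rcases hg with hg | hg
              · exact hfQ (hsQ (hs2Q g hg))
              · exact hfB (ho2B g hg)
          have hfQmem : ¬ ∀ z ∈ G.ends f, z ∈ (Walk.cons e he P0).support := by
            intro hz
            apply hfQ
            show f ∈ {g | g ∈ (Walk.cons e he P0).edges}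
            rw [hgcB]
            exact hz
          have hfBmem : ¬ (x ∈ A ∧ y ∈ A) := by
            rintro ⟨h1, h2⟩
            apply hfB
            rw [hBind]
            intro z hz
            rw [hxy, Sym2.mem_iff] at hz
            rcases hz with rfl | rfl
            exacts [h1, h2]
          rcases hx with hxA | hxS
          · rcases hy with hyA | hyS
            · exact hfBmem ⟨hxA, hyA⟩
            · by_cases hxS' : x ∈ (Walk.cons e he P0).support
              · refine absurd ?_ hfQmem
                intro z hz
                rw [hxy, Sym2.mem_iff] at hz
                rcases hz with rfl | rfl
                exacts [hxS', hyS]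
              · by_cases hyA' : y ∈ A
                · exact hfBmem ⟨hxA, hyA'⟩
                · exact key y x (by rw [hxy]; exact Sym2.eq_swap) (hsupp.mp hyS) hyA' hxA
                    (fun h => hxS' (hsupp.mpr h))
          · rcases hy with hyA | hyS
            · by_cases hxA' : x ∈ A
              · exact hfBmem ⟨hxA', hyA⟩
              · by_cases hyS' : y ∈ (Walk.cons e he P0).support
                · refine absurd ?_ hfQmem
                  intro z hz
                  rw [hxy, Sym2.mem_iff] at hz
                  rcases hz with rfl | rfl
                  exacts [hxS, hyS']
                · exact key x y hxy (hsupp.mp hxS) hxA' hyA (fun h => hyS' (hsupp.mpr h))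
            · refine absurd ?_ hfQmem
              intro z hz
              rw [hxy, Sym2.mem_iff] at hz
              rcases hz with rfl | rfl
              exacts [hxS, hyS]
      · -- two trails between any two vertices of the enlarged set
        intro p hp r hr hpr
        have hmono : ∀ g ∈ ({g | g ∈ (Walk.cons e he P0).edges} : Set G.Edge),
            g ∈ B ∪ {g | g ∈ (Walk.cons e he P0).edges} := fun g hg => Or.inr hg
        have hmono' : ∀ g ∈ B, g ∈ B ∪ {g | g ∈ (Walk.cons e he P0).edges} :=
          fun g hg => Or.inl hg
        have hcycTT : ∀ x y, x ∈ P0.support → y ∈ P0.support → x ≠ y →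
            G.TwoTrails {g | g ∈ (Walk.cons e he P0).edges} x y := by
          intro x y hx hy hxy
          exact hgcTT x (hsupp.mpr hx) y (hsupp.mpr hy) hxy
        rcases hp with hpA | hpS
        · rcases hr with hrA | hrS
          · exact twoTrails_mono hmono' (hTT p hpA r hrA hpr)
          · by_cases hrA' : r ∈ A
            · exact twoTrails_mono hmono' (hTT p hpA r hrA' hpr)
            · have hrP : r ∈ P0.support := hsupp.mp hrS
              have hrc : c ≠ r := fun h => hrA' (h ▸ hcA)
              by_cases hpc : p = c
              · subst hpc
                exact twoTrails_mono hmono (hcycTT p r hcP hrP hpr)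
              · have := twoTrails_comp (hTT p hpA c hcA hpc) (hcycTT c r hcP hrP hrc) hBQ
                exact this
        · by_cases hpA' : p ∈ A
          · rcases hr with hrA | hrS
            · exact twoTrails_mono hmono' (hTT p hpA' r hrA hpr)
            · by_cases hrA' : r ∈ A
              · exact twoTrails_mono hmono' (hTT p hpA' r hrA' hpr)
              · have hrP : r ∈ P0.support := hsupp.mp hrS
                have hrc : c ≠ r := fun h => hrA' (h ▸ hcA)
                by_cases hpc : p = c
                · subst hpc
                  exact twoTrails_mono hmono (hcycTT p r hcP hrP hpr)
                · exact twoTrails_comp (hTT p hpA' c hcA hpc) (hcycTT c r hcP hrP hrc) hBQ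
          · have hpP : p ∈ P0.support := hsupp.mp hpS
            have hpc : p ≠ c := fun h => hpA' (h ▸ hcA)
            rcases hr with hrA | hrS
            · by_cases hrc : r = c
              · subst hrc
                exact twoTrails_mono hmono (hcycTT p r hpP hcP hpr)
              · have hcomp := twoTrails_comp (hcycTT p c hpP hcP hpc)
                  (hTT c hcA r hrA (fun h => hrc h.symm))
                  (fun g hg hgB => hQB g hg hgB)
                refine twoTrails_mono ?_ hcomp
                intro g hg
                rcases hg with hg | hg
                exacts [Or.inr hg, Or.inl hg]
            · by_cases hrA' : r ∈ A
              · by_cases hrc : r = c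
                · subst hrc
                  exact twoTrails_mono hmono (hcycTT p r hpP hcP hpr)
                · have hcomp := twoTrails_comp (hcycTT p c hpP hcP hpc)
                    (hTT c hcA r hrA' (fun h => hrc h.symm))
                    (fun g hg hgB => hQB g hg hgB)
                  refine twoTrails_mono ?_ hcomp
                  intro g hg
                  rcases hg with hg | hg
                  exacts [Or.inr hg, Or.inl hg]
              · exact twoTrails_mono hmono (hcycTT p r hpP (hsupp.mp hrS) hpr)

lemma good_extend (hG : G.ExactlyEdgeConnected 2) : ∀ (n : ℕ) (A : Set V) (B : Set G.Edge),
    G.GoodPair A B → Aᶜ.ncard ≤ n →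
    ∃ (l : ℕ) (Hv : ℕ → Set V) (He : ℕ → Set G.Edge), Hv 0 = A ∧ He 0 = B ∧
      Hv l = Set.univ ∧ He l = Set.univ ∧
      ∀ i < l, ∃ (v : V) (q : G.Walk v v), IsCycle q ∧ v ∈ Hv i ∧
        (∀ x ∈ q.support, x ≠ v → x ∉ Hv i) ∧
        Hv (i + 1) = Hv i ∪ {x | x ∈ q.support} ∧
        He (i + 1) = He i ∪ {f | f ∈ q.edges} := by
  haveI : Finite V := finite_vertex hG
  have base : ∀ (A : Set V) (B : Set G.Edge), G.GoodPair A B → A = Set.univ →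
      ∃ (l : ℕ) (Hv : ℕ → Set V) (He : ℕ → Set G.Edge), Hv 0 = A ∧ He 0 = B ∧
        Hv l = Set.univ ∧ He l = Set.univ ∧
        ∀ i < l, ∃ (v : V) (q : G.Walk v v), IsCycle q ∧ v ∈ Hv i ∧
          (∀ x ∈ q.support, x ≠ v → x ∉ Hv i) ∧
          Hv (i + 1) = Hv i ∪ {x | x ∈ q.support} ∧
          He (i + 1) = He i ∪ {f | f ∈ q.edges} := by
    intro A B hA hAu
    have hBu : B = Set.univ := by
      rw [hA.2.1, hAu]
      ext f
      simp
    exact ⟨0, fun _ => A, fun _ => B, rfl, rfl, hAu, hBu, fun i hi => absurd hi (by omega)⟩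
  intro n
  induction n with
  | zero =>
      intro A B hA hcard
      have hAu : A = Set.univ := by
        have h0 : Aᶜ.ncard = 0 := Nat.le_zero.mp hcard
        have h1 : Aᶜ = ∅ := (Set.ncard_eq_zero (Set.toFinite _)).mp h0
        rwa [Set.compl_empty_iff] at h1
      exact base A B hA hAu
  | succ n ih =>
      intro A B hA hcard
      by_cases hAu : A = Set.univ
      · exact base A B hA hAu
      · obtain ⟨a, q, hcyc, haA, havoid, ⟨z0, hz0s, hz0A⟩, hgood'⟩ := good_step hG hA hAu
        have hcard' : (A ∪ {x | x ∈ q.support})ᶜ.ncard ≤ n := by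
          have hss : (A ∪ {x | x ∈ q.support})ᶜ ⊂ Aᶜ := by
            constructor
            · intro z hz
              simp only [Set.mem_compl_iff, Set.mem_union, Set.mem_setOf_eq, not_or] at hz ⊢
              exact hz.1
            · intro hsub
              have := hsub hz0A
              simp only [Set.mem_compl_iff, Set.mem_union, Set.mem_setOf_eq, not_or] at this
              exact this.2 hz0s
          have := Set.ncard_lt_ncard hss (Set.toFinite _)
          omega
        obtain ⟨l, Hv, He, h0v, h0e, hlv, hle, hstep⟩ := ih _ _ hgood' hcard'
        refine ⟨l + 1, fun i => if i = 0 then A else Hv (i - 1),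
          fun i => if i = 0 then B else He (i - 1), by simp, by simp, by simp [hlv], by simp [hle], ?_⟩
        intro i hi
        rcases Nat.eq_zero_or_pos i with rfl | hipos
        · refine ⟨a, q, hcyc, by simpa using haA, by simpa using havoid, ?_, ?_⟩
          · simp [h0v]
          · simp [h0e]
        · obtain ⟨v, q', h1, h2, h3, h4, h5⟩ := hstep (i - 1) (by omega)
          have e1 : i ≠ 0 := by omega
          have e2 : i + 1 ≠ 0 := by omega
          have e3 : i + 1 - 1 = (i - 1) + 1 := by omega
          refine ⟨v, q', h1, ?_, ?_, ?_, ?_⟩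
          · simpa [e1] using h2
          · simpa [e1] using h3
          · simp only [e1, e2, if_neg, ite_false, e3]
            exact h4
          · simp only [e1, e2, if_neg, ite_false, e3]
            exact h5

theorem robbins_synthesis' (hG : G.ExactlyEdgeConnected 2) :
    ∃ (l : ℕ) (Hv : ℕ → Set V) (He : ℕ → Set G.Edge),
      (∃ (v : V) (p : G.Walk v v), IsCycle p ∧
        Hv 0 = {x | x ∈ p.support} ∧ He 0 = {e | e ∈ p.edges}) ∧
      Hv l = Set.univ ∧ He l = Set.univ ∧
      ∀ i < l, ∃ (v : V) (q : G.Walk v v), IsCycle q ∧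
        v ∈ Hv i ∧ (∀ x ∈ q.support, x ≠ v → x ∉ Hv i) ∧
        Hv (i + 1) = Hv i ∪ {x | x ∈ q.support} ∧
        He (i + 1) = He i ∪ {e | e ∈ q.edges} := by
  obtain ⟨u, w, huw⟩ := hG.1
  obtain ⟨T, hTnd, hTdisj⟩ := (hG.2 u w huw).1
  cases hT0 : T 0 with
  | nil => exact absurd rfl huw
  | cons e he p =>
    rename_i m
    have hnd0 : (T 0).edges.Nodup := hTnd 0
    rw [hT0] at hnd0
    simp only [Walk.edges, List.nodup_cons] at hnd0
    have heT1 : e ∉ (T 1).edges := by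
      intro h
      exact hTdisj 0 1 (by decide) e (by rw [hT0]; simp [Walk.edges]) h
    have heS : e ∉ (p.append (T 1).reverse).edges := by
      rw [Walk.edges_append, List.mem_append]
      push_neg
      exact ⟨hnd0.1, by rw [Walk.edges_reverse, List.mem_reverse]; exact heT1⟩
    obtain ⟨P0, hP0nd, hP0s, hP0e⟩ := Walk.exists_bypass (p.append (T 1).reverse)
    have heP0 : e ∉ P0.edges := fun h => heS (hP0e e h)
    have hmu : m ≠ u := by
      have := G.loopless e
      rw [he, Sym2.mk_isDiag_iff] at this
      exact fun h => this h.symm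
    have hgood := good_cycle hG he P0 hP0nd heP0
    have hcycle : IsCycle (Walk.cons e he P0) := by
      refine ⟨?_, ?_, ?_⟩
      · simp only [Walk.edges, List.nodup_cons]
        exact ⟨heP0, Walk.nodup_edges_of_nodup_support P0 hP0nd⟩
      · simpa only [Walk.support, List.tail_cons] using hP0nd
      · simp only [Walk.edges, List.length_cons]
        have := List.length_pos_iff.mpr (Walk.edges_ne_nil P0 hmu)
        omega
    obtain ⟨l, Hv, He, h0v, h0e, hlv, hle, hstep⟩ := good_extend hG
      ({x | x ∈ (Walk.cons e he P0).support}ᶜ.ncard) _ _ hgood le_rfl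
    exact ⟨l, Hv, He, ⟨u, Walk.cons e he P0, hcycle, h0v, h0e⟩, hlv, hle, hstep⟩


/-- **Robbins synthesis for exactly 2-edge-connected multigraphs.**
Every exactly 2-edge-connected multigraph `G` is obtained by a Robbins
synthesis: there is a sequence `G_0, …, G_l` of subgraphs of `G` (given by
vertex sets `Hv i` and edge sets `He i`), where `G_0` is a simple cycle,
`G_l = G`, and each `G_{i+1}` is obtained from `G_i` by a cycle addition:
attaching a cycle of new vertices that meets `G_i` in exactly one vertex. -/
theorem robbins_synthesis {V : Type} (G : Multigraph V)
    (hG : G.ExactlyEdgeConnected 2) :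
    ∃ (l : ℕ) (Hv : ℕ → Set V) (He : ℕ → Set G.Edge),
      (∃ (v : V) (p : G.Walk v v), IsCycle p ∧
        Hv 0 = {x | x ∈ p.support} ∧ He 0 = {e | e ∈ p.edges}) ∧
      Hv l = Set.univ ∧ He l = Set.univ ∧
      ∀ i < l, ∃ (v : V) (q : G.Walk v v), IsCycle q ∧
        v ∈ Hv i ∧ (∀ x ∈ q.support, x ≠ v → x ∉ Hv i) ∧
        Hv (i + 1) = Hv i ∪ {x | x ∈ q.support} ∧
        He (i + 1) = He i ∪ {e | e ∈ q.edges} := by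
  exact robbins_synthesis' hG

end Multigraph
end

section
/- Let G be an exactly k-edge-connected multigraph in which every minimum edge cut is trivial. Then G is quasi k-regular, i.e., at most one vertex of G has degree different from k. -/
namespace Multigraph


section MengerAux

open Function Set
open scoped Classical

variable {V : Type} {G : Multigraph V}

/-- A partial orientation of the edges of `G`. -/
def OriValid (G : Multigraph V) (σ : G.Edge → Option (V × V)) : Prop :=
  ∀ e a b, σ e = some (a, b) → G.ends e = s(a, b)

def oriOut (σ : G.Edge → Option (V × V)) (x : V) : Set G.Edge :=
  {e | ∃ y, σ e = some (x, y)}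

def oriIn (σ : G.Edge → Option (V × V)) (x : V) : Set G.Edge :=
  {e | ∃ y, σ e = some (y, x)}

noncomputable def oriExc (σ : G.Edge → Option (V × V)) (x : V) : ℤ :=
  ((oriOut σ x).ncard : ℤ) - ((oriIn σ x).ncard : ℤ)

def oriSupp (σ : G.Edge → Option (V × V)) : Set G.Edge := {e | σ e ≠ none}

noncomputable def indZ (a x : V) : ℤ := if x = a then 1 else 0

lemma valid_ne {σ : G.Edge → Option (V × V)} (hv : OriValid G σ) {e : G.Edge} {a b : V}
    (h : σ e = some (a, b)) : a ≠ b := by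
  intro hab
  have := G.loopless e
  rw [hv e a b h, Sym2.mk_isDiag_iff] at this
  exact this hab

lemma oriOut_update_some {σ : G.Edge → Option (V × V)} {e : G.Edge} {a b : V}
    (he : σ e = none) (x : V) :
    oriOut (Function.update σ e (some (a, b))) x =
      if x = a then insert e (oriOut σ x) else oriOut σ x := by
  ext e'
  by_cases h : e' = e
  · subst h
    simp only [oriOut, mem_setOf_eq, Function.update_self]
    by_cases hxa : x = a
    · subst hxa; simp
    · simp only [if_neg hxa, mem_setOf_eq, he]
      constructor
      · rintro ⟨y, hy⟩
        exact absurd (Prod.ext_iff.mp (Option.some.inj hy)).1.symm hxa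
      · rintro ⟨y, hy⟩; exact absurd hy (by simp)
  · simp only [oriOut, mem_setOf_eq, Function.update_of_ne h]
    by_cases hxa : x = a <;> simp [hxa, h]

lemma oriIn_update_some {σ : G.Edge → Option (V × V)} {e : G.Edge} {a b : V}
    (he : σ e = none) (x : V) :
    oriIn (Function.update σ e (some (a, b))) x =
      if x = b then insert e (oriIn σ x) else oriIn σ x := by
  ext e'
  by_cases h : e' = e
  · subst h
    simp only [oriIn, mem_setOf_eq, Function.update_self]
    by_cases hxb : x = b
    · subst hxb; simp
    · simp only [if_neg hxb, mem_setOf_eq, he]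
      constructor
      · rintro ⟨y, hy⟩
        exact absurd (Prod.ext_iff.mp (Option.some.inj hy)).2.symm hxb
      · rintro ⟨y, hy⟩; exact absurd hy (by simp)
  · simp only [oriIn, mem_setOf_eq, Function.update_of_ne h]
    by_cases hxb : x = b <;> simp [hxb, h]

lemma oriOut_update_none {σ : G.Edge → Option (V × V)} {e : G.Edge} (x : V) :
    oriOut (Function.update σ e none) x = oriOut σ x \ {e} := by
  ext e'
  by_cases h : e' = e
  · subst h; simp [oriOut, Function.update_self]
  · simp [oriOut, Function.update_of_ne h, h]

lemma oriIn_update_none {σ : G.Edge → Option (V × V)} {e : G.Edge} (x : V) :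
    oriIn (Function.update σ e none) x = oriIn σ x \ {e} := by
  ext e'
  by_cases h : e' = e
  · subst h; simp [oriIn, Function.update_self]
  · simp [oriIn, Function.update_of_ne h, h]

lemma oriExc_update_some {σ : G.Edge → Option (V × V)} {e : G.Edge} {a b : V}
    (he : σ e = none) (hab : a ≠ b) (x : V) :
    oriExc (Function.update σ e (some (a, b))) x = oriExc σ x + indZ a x - indZ b x := by
  have hout : e ∉ oriOut σ x := by rintro ⟨y, hy⟩; rw [he] at hy; exact absurd hy (by simp)
  have hin : e ∉ oriIn σ x := by rintro ⟨y, hy⟩; rw [he] at hy; exact absurd hy (by simp)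
  unfold oriExc indZ
  rw [oriOut_update_some he, oriIn_update_some he]
  by_cases hxa : x = a <;> by_cases hxb : x = b
  · exact absurd (hxa ▸ hxb ▸ rfl : a = b) hab
  · rw [if_pos hxa, if_neg hxb, if_pos hxa, if_neg hxb,
      Set.ncard_insert_of_notMem hout]
    push_cast; ring
  · rw [if_neg hxa, if_pos hxb, if_neg hxa, if_pos hxb,
      Set.ncard_insert_of_notMem hin]
    push_cast; ring
  · rw [if_neg hxa, if_neg hxb, if_neg hxa, if_neg hxb]; ring

lemma oriExc_update_none {σ : G.Edge → Option (V × V)} {e : G.Edge} {a b : V}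
    (he : σ e = some (a, b)) (hab : a ≠ b) (x : V) :
    oriExc (Function.update σ e none) x = oriExc σ x - indZ a x + indZ b x := by
  have hout : ∀ z, e ∈ oriOut σ z ↔ z = a := by
    intro z; constructor
    · rintro ⟨y, hy⟩; rw [he] at hy; exact (Prod.ext_iff.mp (Option.some.inj hy)).1.symm
    · rintro rfl; exact ⟨b, he⟩
  have hin : ∀ z, e ∈ oriIn σ z ↔ z = b := by
    intro z; constructor
    · rintro ⟨y, hy⟩; rw [he] at hy; exact (Prod.ext_iff.mp (Option.some.inj hy)).2.symm
    · rintro rfl; exact ⟨a, he⟩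
  unfold oriExc indZ
  rw [oriOut_update_none, oriIn_update_none]
  by_cases hxa : x = a <;> by_cases hxb : x = b
  · exact absurd (hxa ▸ hxb ▸ rfl : a = b) hab
  · rw [if_pos hxa, if_neg hxb]
    rw [Set.diff_singleton_eq_self (fun h => hxb ((hin x).1 h))]
    have hmem : e ∈ oriOut σ x := (hout x).2 hxa
    have h1 : (oriOut σ x \ {e}).ncard + 1 = (oriOut σ x).ncard :=
      Set.ncard_diff_singleton_add_one hmem
    push_cast [← h1]; ring
  · rw [if_neg hxa, if_pos hxb]
    rw [Set.diff_singleton_eq_self (fun h => hxa ((hout x).1 h))]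
    have hmem : e ∈ oriIn σ x := (hin x).2 hxb
    have h1 : (oriIn σ x \ {e}).ncard + 1 = (oriIn σ x).ncard :=
      Set.ncard_diff_singleton_add_one hmem
    push_cast [← h1]; ring
  · rw [if_neg hxa, if_neg hxb]
    rw [Set.diff_singleton_eq_self (fun h => hxa ((hout x).1 h)),
      Set.diff_singleton_eq_self (fun h => hxb ((hin x).1 h))]
    ring


@[simp] lemma indZ_self (a : V) : indZ a a = 1 := if_pos rfl

lemma indZ_of_ne {a x : V} (h : x ≠ a) : indZ a x = 0 := if_neg h

lemma ends_ne {e : G.Edge} {a b : V} (h : G.ends e = s(a, b)) : a ≠ b := by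
  intro hab
  have := G.loopless e
  rw [h, Sym2.mk_isDiag_iff] at this
  exact this hab

lemma valid_update_some {σ : G.Edge → Option (V × V)} (hv : OriValid G σ) {e : G.Edge}
    {a b : V} (h : G.ends e = s(a, b)) :
    OriValid G (Function.update σ e (some (a, b))) := by
  intro e' a' b' h'
  by_cases he' : e' = e
  · subst he'
    rw [Function.update_self] at h'
    rw [Option.some.injEq, Prod.mk.injEq] at h'
    obtain ⟨rfl, rfl⟩ := h'
    exact h
  · rw [Function.update_of_ne he'] at h'
    exact hv e' a' b' h'

lemma valid_update_none {σ : G.Edge → Option (V × V)} (hv : OriValid G σ) {e : G.Edge} :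
    OriValid G (Function.update σ e none) := by
  intro e' a' b' h'
  by_cases he' : e' = e
  · subst he'; rw [Function.update_self] at h'; exact absurd h' (by simp)
  · rw [Function.update_of_ne he'] at h'; exact hv e' a' b' h'

lemma oriSupp_update_none {σ : G.Edge → Option (V × V)} {e : G.Edge} :
    oriSupp (Function.update σ e none) = oriSupp σ \ {e} := by
  ext e'
  by_cases h : e' = e
  · subst h; simp [oriSupp, Function.update_self]
  · simp [oriSupp, Function.update_of_ne h, h]

/-- Residual chains: edges traversable forwards if unused, or cancelling existing flow. -/
def IsRChain (σ : G.Edge → Option (V × V)) : List G.Edge → V → V → Prop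
  | [], a, c => a = c
  | e :: l, a, c => ∃ b, G.ends e = s(a, b) ∧ (σ e = none ∨ σ e = some (b, a)) ∧ IsRChain σ l b c

/-- Flow chains: walks along the orientation. -/
def IsFChain (σ : G.Edge → Option (V × V)) : List G.Edge → V → V → Prop
  | [], a, c => a = c
  | e :: l, a, c => ∃ b, σ e = some (a, b) ∧ IsFChain σ l b c

lemma rchain_append {σ : G.Edge → Option (V × V)} :
    ∀ {l₁ l₂ : List G.Edge} {a c : V},
      IsRChain σ (l₁ ++ l₂) a c ↔ ∃ m, IsRChain σ l₁ a m ∧ IsRChain σ l₂ m c := by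
  intro l₁
  induction l₁ with
  | nil =>
    intro l₂ a c
    constructor
    · intro h; exact ⟨a, rfl, h⟩
    · rintro ⟨m, rfl, h⟩; exact h
  | cons e t ih =>
    intro l₂ a c
    constructor
    · rintro ⟨b, h1, h2, h3⟩
      obtain ⟨m, hm1, hm2⟩ := ih.mp h3
      exact ⟨m, ⟨b, h1, h2, hm1⟩, hm2⟩
    · rintro ⟨m, ⟨b, h1, h2, h3⟩, hm2⟩
      exact ⟨b, h1, h2, ih.mpr ⟨m, h3, hm2⟩⟩

lemma rchain_congr {σ σ' : G.Edge → Option (V × V)} :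
    ∀ {l : List G.Edge} {a c : V}, (∀ e ∈ l, σ' e = σ e) →
      IsRChain σ l a c → IsRChain σ' l a c := by
  intro l
  induction l with
  | nil => intro a c _ h; exact h
  | cons e t ih =>
    rintro a c hagree ⟨b, h1, h2, h3⟩
    exact ⟨b, h1, by rw [hagree e (List.mem_cons_self)]; exact h2,
      ih (fun e' he' => hagree e' (List.mem_cons_of_mem e he')) h3⟩

lemma fchain_congr {σ σ' : G.Edge → Option (V × V)} :
    ∀ {l : List G.Edge} {a c : V}, (∀ e ∈ l, σ' e = σ e) →
      IsFChain σ l a c → IsFChain σ' l a c := by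
  intro l
  induction l with
  | nil => intro a c _ h; exact h
  | cons e t ih =>
    rintro a c hagree ⟨b, h1, h3⟩
    exact ⟨b, by rw [hagree e (List.mem_cons_self)]; exact h1,
      ih (fun e' he' => hagree e' (List.mem_cons_of_mem e he')) h3⟩

lemma fchain_supp {σ : G.Edge → Option (V × V)} :
    ∀ {l : List G.Edge} {a c : V}, IsFChain σ l a c → ∀ e ∈ l, σ e ≠ none := by
  intro l
  induction l with
  | nil => intro a c _ e he; exact absurd he List.not_mem_nil
  | cons e' t ih =>
    rintro a c ⟨b, h1, h3⟩ e he
    rcases List.mem_cons.mp he with rfl | he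
    · rw [h1]; simp
    · exact ih h3 e he

lemma not_nodup_decomp {α : Type*} :
    ∀ {l : List α}, ¬ l.Nodup →
      ∃ (x : α) (l₁ l₂ l₃ : List α), l = l₁ ++ (x :: (l₂ ++ (x :: l₃))) := by
  intro l
  induction l with
  | nil => intro h; exact absurd List.nodup_nil h
  | cons e t ih =>
    intro h
    by_cases he : e ∈ t
    · obtain ⟨s, r, rfl⟩ := List.append_of_mem he
      exact ⟨e, [], s, r, rfl⟩
    · have ht : ¬ t.Nodup := fun hn => h (List.nodup_cons.mpr ⟨he, hn⟩)
      obtain ⟨x, l₁, l₂, l₃, rfl⟩ := ih ht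
      exact ⟨x, e :: l₁, l₂, l₃, rfl⟩

lemma rchain_dedup {σ : G.Edge → Option (V × V)} {a c : V} :
    ∀ (n : ℕ) (l : List G.Edge), l.length ≤ n → IsRChain σ l a c →
      ∃ l', l'.Nodup ∧ IsRChain σ l' a c := by
  intro n
  induction n with
  | zero =>
    intro l hl h
    rw [List.eq_nil_of_length_eq_zero (Nat.le_zero.mp hl)] at h
    exact ⟨[], List.nodup_nil, h⟩
  | succ n ih =>
    intro l hl h
    by_cases hnd : l.Nodup
    · exact ⟨l, hnd, h⟩
    · obtain ⟨x, l₁, l₂, l₃, rfl⟩ := not_nodup_decomp hnd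
      obtain ⟨m₁, h1, hrest⟩ := rchain_append.mp h
      obtain ⟨b₁, hx1, hc1, hrest2⟩ := hrest
      obtain ⟨m₂, h2, hrest3⟩ := rchain_append.mp hrest2
      obtain ⟨b₂, hx2, hc2, h3⟩ := hrest3
      have heq := Sym2.eq_iff.mp (hx1.symm.trans hx2)
      have hlen : (l₁ ++ (x :: (l₂ ++ (x :: l₃)))).length ≤ n + 1 := hl
      simp only [List.length_append, List.length_cons] at hlen
      rcases heq with ⟨hm, hb⟩ | ⟨hm, hb⟩
      · -- m₁ = m₂, b₁ = b₂ : splice to l₁ ++ x :: l₃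
        refine ih (l₁ ++ (x :: l₃)) ?_ ?_
        · simp only [List.length_append, List.length_cons]; omega
        · exact rchain_append.mpr ⟨m₁, h1, ⟨b₁, hx1, hc1, by rw [hb]; exact h3⟩⟩
      · -- m₁ = b₂, b₁ = m₂ : splice to l₁ ++ l₃
        refine ih (l₁ ++ l₃) ?_ ?_
        · simp only [List.length_append]; omega
        · exact rchain_append.mpr ⟨m₁, h1, by rw [hm]; exact h3⟩

lemma exists_augment {c : V} :
    ∀ (l : List G.Edge) (σ : G.Edge → Option (V × V)), OriValid G σ → ∀ (a : V),
      l.Nodup → IsRChain σ l a c →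
      ∃ σ', OriValid G σ' ∧ (∀ e, e ∉ l → σ' e = σ e) ∧
        ∀ x, oriExc σ' x = oriExc σ x + indZ a x - indZ c x := by
  intro l
  induction l with
  | nil =>
    rintro σ hv a _ rfl
    exact ⟨σ, hv, fun _ _ => rfl, fun x => by ring⟩
  | cons e t ih =>
    rintro σ hv a hnd ⟨b, hends, hcond, hl⟩
    have hab : a ≠ b := ends_ne hends
    have het : e ∉ t := (List.nodup_cons.mp hnd).1
    rcases hcond with hnone | hback
    · set σ₁ := Function.update σ e (some (a, b)) with hσ₁
      have hv₁ : OriValid G σ₁ := valid_update_some hv hends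
      have hexc₁ : ∀ x, oriExc σ₁ x = oriExc σ x + indZ a x - indZ b x :=
        oriExc_update_some hnone hab
      have hl₁ : IsRChain σ₁ t b c :=
        rchain_congr (fun e' he' => Function.update_of_ne (fun h => het (by rw [← h]; exact he')) _ _) hl
      obtain ⟨σ', hv', hoff, hexc⟩ := ih σ₁ hv₁ b (List.nodup_cons.mp hnd).2 hl₁
      refine ⟨σ', hv', ?_, ?_⟩
      · intro e' he'
        rw [hoff e' (fun h => he' (List.mem_cons_of_mem _ h)), hσ₁,
          Function.update_of_ne (fun h => he' (by rw [h]; exact List.mem_cons_self))]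
      · intro x
        rw [hexc x, hexc₁ x]
        by_cases hxb : x = b
        · subst hxb; rw [indZ_self, indZ_of_ne hab.symm]; ring
        · rw [indZ_of_ne hxb]; ring
    · set σ₁ := Function.update σ e none with hσ₁
      have hv₁ : OriValid G σ₁ := valid_update_none hv
      have hexc₁ : ∀ x, oriExc σ₁ x = oriExc σ x - indZ b x + indZ a x :=
        oriExc_update_none hback (valid_ne hv hback)
      have hl₁ : IsRChain σ₁ t b c :=
        rchain_congr (fun e' he' => Function.update_of_ne (fun h => het (by rw [← h]; exact he')) _ _) hl
      obtain ⟨σ', hv', hoff, hexc⟩ := ih σ₁ hv₁ b (List.nodup_cons.mp hnd).2 hl₁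
      refine ⟨σ', hv', ?_, ?_⟩
      · intro e' he'
        rw [hoff e' (fun h => he' (List.mem_cons_of_mem _ h)), hσ₁,
          Function.update_of_ne (fun h => he' (by rw [h]; exact List.mem_cons_self))]
      · intro x
        rw [hexc x, hexc₁ x]; ring

lemma exists_clear {c : V} :
    ∀ (l : List G.Edge) (σ : G.Edge → Option (V × V)), OriValid G σ → ∀ (a : V),
      l.Nodup → IsFChain σ l a c →
      ∃ σ', OriValid G σ' ∧ (∀ e, e ∉ l → σ' e = σ e) ∧ (∀ e ∈ l, σ' e = none) ∧
        ∀ x, oriExc σ' x = oriExc σ x - indZ a x + indZ c x := by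
  intro l
  induction l with
  | nil =>
    rintro σ hv a _ rfl
    exact ⟨σ, hv, fun _ _ => rfl, fun e he => absurd he List.not_mem_nil,
      fun x => by ring⟩
  | cons e t ih =>
    rintro σ hv a hnd ⟨b, he, hl⟩
    have hab : a ≠ b := valid_ne hv he
    have het : e ∉ t := (List.nodup_cons.mp hnd).1
    set σ₁ := Function.update σ e none with hσ₁
    have hv₁ : OriValid G σ₁ := valid_update_none hv
    have hexc₁ : ∀ x, oriExc σ₁ x = oriExc σ x - indZ a x + indZ b x :=
      oriExc_update_none he hab
    have hl₁ : IsFChain σ₁ t b c :=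
      fchain_congr (fun e' he' => Function.update_of_ne (fun h => het (by rw [← h]; exact he')) _ _) hl
    obtain ⟨σ', hv', hoff, hon, hexc⟩ := ih σ₁ hv₁ b (List.nodup_cons.mp hnd).2 hl₁
    refine ⟨σ', hv', ?_, ?_, ?_⟩
    · intro e' he'
      rw [hoff e' (fun h => he' (List.mem_cons_of_mem _ h)), hσ₁,
        Function.update_of_ne (fun h => he' (by rw [h]; exact List.mem_cons_self))]
    · intro e' he'
      rcases List.mem_cons.mp he' with rfl | he'
      · rw [hoff e' het, hσ₁, Function.update_self]
      · exact hon e' he'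
    · intro x
      rw [hexc x, hexc₁ x]
      by_cases hxb : x = b
      · subst hxb; rw [indZ_self, indZ_of_ne hab.symm]; ring
      · rw [indZ_of_ne hxb]; ring

lemma fchain_toWalk {σ : G.Edge → Option (V × V)} (hv : OriValid G σ) :
    ∀ (l : List G.Edge) (a c : V), IsFChain σ l a c → ∃ p : G.Walk a c, p.edges = l := by
  intro l
  induction l with
  | nil => rintro a c rfl; exact ⟨Walk.nil a, rfl⟩
  | cons e t ih =>
    rintro a c ⟨b, he, hl⟩
    obtain ⟨p, hp⟩ := ih b c hl
    exact ⟨Walk.cons e (hv e a b he) p, by simp [Walk.edges, hp]⟩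

lemma exists_extract (v : V) :
    ∀ (n : ℕ) (σ : G.Edge → Option (V × V)), (oriSupp σ).ncard ≤ n → OriValid G σ →
      ∀ x, x ≠ v → 1 ≤ oriExc σ x → (∀ y, y ≠ x → y ≠ v → 0 ≤ oriExc σ y) →
      ∃ l, l.Nodup ∧ IsFChain σ l x v := by
  intro n
  induction n with
  | zero =>
    intro σ hs hv x hxv hx hy
    exfalso
    have hone : (oriOut σ x).Nonempty := by
      by_contra h
      rw [Set.not_nonempty_iff_eq_empty] at h
      have : oriExc σ x ≤ 0 := by
        unfold oriExc
        rw [h, Set.ncard_empty]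
        have : (0:ℤ) ≤ ((oriIn σ x).ncard : ℤ) := Int.ofNat_nonneg _
        omega
      omega
    obtain ⟨e, b, he⟩ := hone
    have hesupp : e ∈ oriSupp σ := by simp [oriSupp, he]
    have : (oriSupp σ).ncard = 0 := Nat.le_zero.mp hs
    rw [Set.ncard_eq_zero (Set.toFinite _)] at this
    rw [this] at hesupp
    exact hesupp
  | succ n ih =>
    intro σ hs hv x hxv hx hy
    have hone : (oriOut σ x).Nonempty := by
      by_contra h
      rw [Set.not_nonempty_iff_eq_empty] at h
      have : oriExc σ x ≤ 0 := by
        unfold oriExc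
        rw [h, Set.ncard_empty]
        have : (0:ℤ) ≤ ((oriIn σ x).ncard : ℤ) := Int.ofNat_nonneg _
        omega
      omega
    obtain ⟨e, b, he⟩ := hone
    have hesupp : e ∈ oriSupp σ := by simp [oriSupp, he]
    have hab : x ≠ b := valid_ne hv he
    by_cases hbv : b = v
    · exact ⟨[e], List.nodup_singleton e, ⟨b, he, hbv⟩⟩
    · set σ₁ := Function.update σ e none with hσ₁
      have hv₁ : OriValid G σ₁ := valid_update_none hv
      have hexc₁ : ∀ z, oriExc σ₁ z = oriExc σ z - indZ x z + indZ b z :=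
        oriExc_update_none he hab
      have hsupp₁ : (oriSupp σ₁).ncard ≤ n := by
        rw [hσ₁, oriSupp_update_none]
        have := Set.ncard_diff_singleton_add_one hesupp (Set.toFinite _)
        omega
      have hexcb : 1 ≤ oriExc σ₁ b := by
        rw [hexc₁ b, indZ_of_ne hab.symm, indZ_self]
        have := hy b hab.symm hbv
        omega
      have hexcy : ∀ y, y ≠ b → y ≠ v → 0 ≤ oriExc σ₁ y := by
        intro y hyb hyv
        rw [hexc₁ y, indZ_of_ne hyb]
        by_cases hyx : y = x
        · subst hyx; rw [indZ_self]; omega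
        · rw [indZ_of_ne hyx]
          have := hy y hyx hyv
          omega
      obtain ⟨l, hnd, hch⟩ := ih σ₁ hsupp₁ hv₁ b hbv hexcb hexcy
      have hel : e ∉ l := fun hmem =>
        (fchain_supp hch e hmem) (by rw [hσ₁]; exact Function.update_self _ _ _)
      have hch' : IsFChain σ l b v :=
        fchain_congr (fun e' he' =>
          (Function.update_of_ne (fun h => hel (by rw [← h]; exact he')) _ _).symm) hch
      exact ⟨e :: l, List.nodup_cons.mpr ⟨hel, hnd⟩, ⟨b, he, hch'⟩⟩

/-- `σ` is a flow of value `n` from `u` to `v`. -/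
def OriFlow (G : Multigraph V) (σ : G.Edge → Option (V × V)) (u v : V) (n : ℕ) : Prop :=
  OriValid G σ ∧ (∀ x, x ≠ u → x ≠ v → oriExc σ x = 0) ∧ oriExc σ u = n

lemma flow_decomp {u v : V} (huv : u ≠ v) :
    ∀ (n : ℕ) (σ : G.Edge → Option (V × V)), OriFlow G σ u v n →
      ∃ P : Fin n → G.Walk u v, (∀ i, (P i).edges.Nodup) ∧
        (∀ i j, i ≠ j → ∀ e, e ∈ (P i).edges → e ∉ (P j).edges) ∧
        (∀ i, ∀ e ∈ (P i).edges, σ e ≠ none) := by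
  intro n
  induction n with
  | zero =>
    intro σ _
    exact ⟨fun i => i.elim0, fun i => i.elim0, fun i => i.elim0, fun i => i.elim0⟩
  | succ n ih =>
    rintro σ ⟨hv, hcons, hval⟩
    obtain ⟨l, hnd, hch⟩ := exists_extract v ((oriSupp σ).ncard) σ le_rfl hv u huv
      (by rw [hval]; push_cast; omega)
      (fun y hyu hyv => by rw [hcons y hyu hyv])
    obtain ⟨σ', hv', hoff, hon, hexc⟩ := exists_clear l σ hv u hnd hch
    have hflow' : OriFlow G σ' u v n := by
      refine ⟨hv', ?_, ?_⟩
      · intro x hxu hxv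
        rw [hexc x, hcons x hxu hxv, indZ_of_ne hxu, indZ_of_ne hxv]; ring
      · rw [hexc u, hval, indZ_self, indZ_of_ne huv]
        push_cast; ring
    obtain ⟨P', hnd', hdisj', hsupp'⟩ := ih σ' hflow'
    obtain ⟨T, hT⟩ := fchain_toWalk hv l u v hch
    refine ⟨fun i => if h : i = 0 then T else P' (i.pred h), ?_, ?_, ?_⟩
    · intro i
      by_cases h : i = 0
      · simp only [dif_pos h, hT]; exact hnd
      · simp only [dif_neg h]; exact hnd' _
    · intro i j hij e hei hej
      by_cases hi : i = 0 <;> by_cases hj : j = 0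
      · exact hij (hi.trans hj.symm)
      · simp only [dif_pos hi, hT] at hei
        simp only [dif_neg hj] at hej
        exact (hsupp' _ e hej) (hon e hei)
      · simp only [dif_neg hi] at hei
        simp only [dif_pos hj, hT] at hej
        exact (hsupp' _ e hei) (hon e hej)
      · simp only [dif_neg hi] at hei
        simp only [dif_neg hj] at hej
        exact hdisj' (i.pred hi) (j.pred hj)
          (fun hpred => hij (by rw [← Fin.succ_pred i hi, ← Fin.succ_pred j hj, hpred]))
          e hei hej
    · intro i e he
      by_cases h : i = 0
      · simp only [dif_pos h, hT] at he
        exact fchain_supp hch e he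
      · simp only [dif_neg h] at he
        have hne' : σ' e ≠ none := hsupp' _ e he
        intro hnone
        by_cases hel : e ∈ l
        · exact hne' (hon e hel)
        · exact hne' ((hoff e hel).trans hnone)


attribute [local instance] Fintype.ofFinite

lemma ncard_eq_sum [Fintype G.Edge] (s : Set G.Edge) :
    ((s.ncard : ℤ)) = ∑ e : G.Edge, if e ∈ s then (1:ℤ) else 0 := by
  rw [Finset.sum_boole]
  norm_cast
  rw [Set.ncard_eq_toFinset_card' s]
  congr 1
  ext e
  simp

lemma oriExc_eq_sum [Fintype G.Edge] (σ : G.Edge → Option (V × V)) (x : V) :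
    oriExc σ x = ∑ e : G.Edge,
      ((if e ∈ oriOut σ x then (1:ℤ) else 0) - (if e ∈ oriIn σ x then 1 else 0)) := by
  rw [Finset.sum_sub_distrib, ← ncard_eq_sum, ← ncard_eq_sum]
  rfl

noncomputable def contribZ (σ : G.Edge → Option (V × V)) (S : Set V) (e : G.Edge) : ℤ :=
  (if (∃ p : V × V, σ e = some p ∧ p.1 ∈ S) then 1 else 0) -
    (if (∃ p : V × V, σ e = some p ∧ p.2 ∈ S) then 1 else 0)

lemma sum_oriExc [Fintype G.Edge] (σ : G.Edge → Option (V × V)) {S : Set V}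
    (hS : S.Finite) :
    ∑ x ∈ hS.toFinset, oriExc σ x = ∑ e : G.Edge, contribZ σ S e := by
  have h1 : ∀ x ∈ hS.toFinset, oriExc σ x = ∑ e : G.Edge,
      ((if e ∈ oriOut σ x then (1:ℤ) else 0) - (if e ∈ oriIn σ x then 1 else 0)) :=
    fun x _ => oriExc_eq_sum σ x
  rw [Finset.sum_congr rfl h1, Finset.sum_comm]
  apply Finset.sum_congr rfl
  intro e _
  rcases hσe : σ e with _ | ⟨a, b⟩
  · have hout : ∀ x, e ∉ oriOut σ x := by
      rintro x ⟨y, hy⟩; rw [hσe] at hy; exact absurd hy (by simp)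
    have hin : ∀ x, e ∉ oriIn σ x := by
      rintro x ⟨y, hy⟩; rw [hσe] at hy; exact absurd hy (by simp)
    simp [contribZ, hσe, hout, hin]
  · have hout : ∀ x, e ∈ oriOut σ x ↔ x = a := by
      intro x; constructor
      · rintro ⟨y, hy⟩; rw [hσe] at hy
        exact (Prod.ext_iff.mp (Option.some.inj hy)).1.symm
      · rintro rfl; exact ⟨b, hσe⟩
    have hin : ∀ x, e ∈ oriIn σ x ↔ x = b := by
      intro x; constructor
      · rintro ⟨y, hy⟩; rw [hσe] at hy
        exact (Prod.ext_iff.mp (Option.some.inj hy)).2.symm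
      · rintro rfl; exact ⟨a, hσe⟩
    rw [Finset.sum_sub_distrib]
    have e1 : ∀ x ∈ hS.toFinset, (if e ∈ oriOut σ x then (1:ℤ) else 0) =
        if x = a then (1:ℤ) else 0 := fun x _ => if_congr (hout x) rfl rfl
    have e2 : ∀ x ∈ hS.toFinset, (if e ∈ oriIn σ x then (1:ℤ) else 0) =
        if x = b then (1:ℤ) else 0 := fun x _ => if_congr (hin x) rfl rfl
    rw [Finset.sum_congr rfl e1, Finset.sum_congr rfl e2,
      Finset.sum_ite_eq' hS.toFinset a (fun _ => (1:ℤ)),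
      Finset.sum_ite_eq' hS.toFinset b (fun _ => (1:ℤ))]
    simp only [contribZ, hσe, Option.some.injEq, Set.Finite.mem_toFinset]
    congr 1
    · by_cases haS : a ∈ S
      · rw [if_pos haS, if_pos ⟨(a, b), rfl, haS⟩]
      · rw [if_neg haS, if_neg]
        rintro ⟨p, hp, hp1⟩
        rw [← hp] at hp1
        exact haS hp1
    · by_cases hbS : b ∈ S
      · rw [if_pos hbS, if_pos ⟨(a, b), rfl, hbS⟩]
      · rw [if_neg hbS, if_neg]
        rintro ⟨p, hp, hp2⟩
        rw [← hp] at hp2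
        exact hbS hp2

lemma sym2_eq_of_mem {z : Sym2 V} {x y : V} (hx : x ∈ z) (hy : y ∈ z) (hxy : x ≠ y) :
    z = s(x, y) := by
  obtain ⟨a, b, rfl⟩ := exists_pair_eq z
  rcases Sym2.mem_iff.mp hx with rfl | rfl <;> rcases Sym2.mem_iff.mp hy with rfl | rfl
  · exact absurd rfl hxy
  · rfl
  · exact Sym2.eq_swap
  · exact absurd rfl hxy

lemma rchain_last {σ : G.Edge → Option (V × V)} :
    ∀ {l : List G.Edge} {a c : V}, IsRChain σ l a c → c = a ∨ ∃ e ∈ l, c ∈ G.ends e := by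
  intro l
  induction l with
  | nil => rintro a c rfl; exact Or.inl rfl
  | cons e t ih =>
    rintro a c ⟨b, hends, _, hl⟩
    rcases ih hl with rfl | ⟨e', he', hc⟩
    · exact Or.inr ⟨e, List.mem_cons_self, by rw [hends]; exact Sym2.mem_mk_right _ _⟩
    · exact Or.inr ⟨e', List.mem_cons_of_mem _ he', hc⟩

lemma exists_flow {u v : V} (huv : u ≠ v) {n : ℕ}
    (hcut : ∀ B : Set V, u ∈ B → v ∉ B → n ≤ (G.cutEdges B).ncard) :
    ∀ j, j ≤ n → ∃ σ, OriFlow G σ u v j := by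
  intro j
  induction j with
  | zero =>
    intro _
    refine ⟨fun _ => none, fun e a b h => absurd h (by simp), ?_, ?_⟩
    · intro x _ _
      have h1 : oriOut (fun _ => none) x = (∅ : Set G.Edge) := by
        ext e; simp [oriOut]
      have h2 : oriIn (fun _ => none) x = (∅ : Set G.Edge) := by
        ext e; simp [oriIn]
      unfold oriExc
      rw [h1, h2, Set.ncard_empty]
      ring
    · have h1 : oriOut (fun _ => none) u = (∅ : Set G.Edge) := by
        ext e; simp [oriOut]
      have h2 : oriIn (fun _ => none) u = (∅ : Set G.Edge) := by
        ext e; simp [oriIn]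
      unfold oriExc
      rw [h1, h2, Set.ncard_empty]
      ring
  | succ j ih =>
    intro hj1
    obtain ⟨σ, hflow⟩ := ih (Nat.le_of_succ_le hj1)
    by_cases hvR : ∃ l, IsRChain σ l u v
    · obtain ⟨l, hl⟩ := hvR
      obtain ⟨l', hnd, hl'⟩ := rchain_dedup l.length l le_rfl hl
      obtain ⟨σ', hv', _, hexc⟩ := exists_augment l' σ hflow.1 u hnd hl'
      refine ⟨σ', hv', ?_, ?_⟩
      · intro x hxu hxv
        rw [hexc x, hflow.2.1 x hxu hxv, indZ_of_ne hxu, indZ_of_ne hxv]; ring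
      · rw [hexc u, hflow.2.2, indZ_self, indZ_of_ne huv]; push_cast; ring
    · exfalso
      set R : Set V := {y | ∃ l, IsRChain σ l u y} with hRdef
      have huR : u ∈ R := ⟨[], rfl⟩
      have hvnR : v ∉ R := hvR
      have hRfin : R.Finite := by
        have hbig : ({y | ∃ e : G.Edge, y ∈ G.ends e} : Set V).Finite := by
          have heq : {y | ∃ e : G.Edge, y ∈ G.ends e} = ⋃ e : G.Edge, {y | y ∈ G.ends e} := by
            ext y; simp
          rw [heq]
          refine Set.finite_iUnion fun e => ?_
          obtain ⟨a, b, hab⟩ := exists_pair_eq (G.ends e)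
          have : {y | y ∈ G.ends e} = {a, b} := by
            ext y; rw [hab]; simp [Sym2.mem_iff]
          rw [this]
          exact (Set.finite_singleton b).insert a
        refine Set.Finite.subset (hbig.insert u) ?_
        rintro y ⟨l, hl⟩
        rcases rchain_last hl with rfl | ⟨e, _, hc⟩
        · exact Set.mem_insert _ _
        · exact Set.mem_insert_of_mem _ ⟨e, hc⟩
      have hclosed : ∀ x ∈ R, ∀ (e : G.Edge) (y : V), G.ends e = s(x, y) →
          (σ e = none ∨ σ e = some (y, x)) → y ∈ R := by
        rintro x ⟨l, hl⟩ e y hends hcond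
        exact ⟨l ++ [e], rchain_append.mpr ⟨x, hl, ⟨y, hends, hcond, rfl⟩⟩⟩
      have hcross : ∀ e ∈ G.cutEdges R, ∃ a b, σ e = some (a, b) ∧ a ∈ R ∧ b ∉ R := by
        rintro e ⟨⟨x, hxe, hxR⟩, ⟨y, hye, hyR⟩⟩
        have hxy : x ≠ y := fun h => hyR (h ▸ hxR)
        have hends : G.ends e = s(x, y) := sym2_eq_of_mem hxe hye hxy
        rcases hσe : σ e with _ | ⟨a, b⟩
        · exact absurd (hclosed x hxR e y hends (Or.inl hσe)) hyR
        · have h2 := (hflow.1 e a b hσe).symm.trans hends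
          rcases Sym2.eq_iff.mp h2 with ⟨ha, hb⟩ | ⟨ha, hb⟩
          · exact ⟨a, b, rfl, by rw [ha]; exact hxR, by rw [hb]; exact hyR⟩
          · exfalso
            have : σ e = some (y, x) := by rw [hσe, ha, hb]
            exact hyR (hclosed x hxR e y hends (Or.inr this))
      have hcontrib : ∀ e : G.Edge, contribZ σ R e = if e ∈ G.cutEdges R then 1 else 0 := by
        intro e
        by_cases hc : e ∈ G.cutEdges R
        · obtain ⟨a, b, hσe, haR, hbR⟩ := hcross e hc
          have c1 : (∃ p : V × V, σ e = some p ∧ p.1 ∈ R) := ⟨(a, b), hσe, haR⟩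
          have c2 : ¬ (∃ p : V × V, σ e = some p ∧ p.2 ∈ R) := by
            rintro ⟨p, hp, hp2⟩
            rw [hσe, Option.some.injEq] at hp
            rw [← hp] at hp2
            exact hbR hp2
          unfold contribZ
          rw [if_pos c1, if_neg c2, if_pos hc]
          norm_num
        · rcases hσe : σ e with _ | ⟨a, b⟩
          · have c1 : ¬ (∃ p : V × V, σ e = some p ∧ p.1 ∈ R) := by
              rintro ⟨p, hp, _⟩; rw [hσe] at hp; exact absurd hp (by simp)
            have c2 : ¬ (∃ p : V × V, σ e = some p ∧ p.2 ∈ R) := by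
              rintro ⟨p, hp, _⟩; rw [hσe] at hp; exact absurd hp (by simp)
            unfold contribZ
            rw [if_neg c1, if_neg c2, if_neg hc]
            ring
          · have hends := hflow.1 e a b hσe
            have haend : a ∈ G.ends e := by rw [hends]; exact Sym2.mem_mk_left _ _
            have hbend : b ∈ G.ends e := by rw [hends]; exact Sym2.mem_mk_right _ _
            have hiff : (a ∈ R) ↔ (b ∈ R) := by
              constructor
              · intro haR
                by_contra hbR
                exact hc ⟨⟨a, haend, haR⟩, ⟨b, hbend, hbR⟩⟩
              · intro hbR
                by_contra haR
                exact hc ⟨⟨b, hbend, hbR⟩, ⟨a, haend, haR⟩⟩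
            by_cases haR : a ∈ R
            · have c1 : (∃ p : V × V, σ e = some p ∧ p.1 ∈ R) := ⟨(a, b), hσe, haR⟩
              have c2 : (∃ p : V × V, σ e = some p ∧ p.2 ∈ R) :=
                ⟨(a, b), hσe, hiff.mp haR⟩
              unfold contribZ
              rw [if_pos c1, if_pos c2, if_neg hc]
              ring
            · have c1 : ¬ (∃ p : V × V, σ e = some p ∧ p.1 ∈ R) := by
                rintro ⟨p, hp, hp1⟩
                rw [hσe, Option.some.injEq] at hp
                rw [← hp] at hp1
                exact haR hp1
              have c2 : ¬ (∃ p : V × V, σ e = some p ∧ p.2 ∈ R) := by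
                rintro ⟨p, hp, hp2⟩
                rw [hσe, Option.some.injEq] at hp
                rw [← hp] at hp2
                exact haR (hiff.mpr hp2)
              unfold contribZ
              rw [if_neg c1, if_neg c2, if_neg hc]
              ring
      letI : Fintype G.Edge := Fintype.ofFinite _
      have hsum := sum_oriExc σ hRfin
      have hL : ∑ x ∈ hRfin.toFinset, oriExc σ x = (j : ℤ) := by
        rw [Finset.sum_eq_single_of_mem u (by simp [Set.Finite.mem_toFinset, huR])]
        · exact hflow.2.2
        · intro x hx hxu
          refine hflow.2.1 x hxu fun h => hvnR ?_
          rw [← h]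
          exact (Set.Finite.mem_toFinset hRfin).mp hx
      have hRcut : ((G.cutEdges R).ncard : ℤ) = (j : ℤ) := by
        rw [← hL, hsum, Finset.sum_congr rfl (fun e _ => hcontrib e), ← ncard_eq_sum]
      have hge := hcut R huR hvnR
      have : (G.cutEdges R).ncard = j := by exact_mod_cast hRcut
      omega

lemma menger {u v : V} (huv : u ≠ v) {n : ℕ}
    (hcut : ∀ B : Set V, u ∈ B → v ∉ B → n ≤ (G.cutEdges B).ncard) : G.HasEDP u v n := by
  obtain ⟨σ, hσ⟩ := exists_flow huv hcut n le_rfl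
  obtain ⟨P, h1, h2, _⟩ := flow_decomp huv n σ hσ
  exact ⟨P, h1, h2⟩

lemma walk_cross {B : Set V} :
    ∀ {a c : V} (p : G.Walk a c), a ∈ B → c ∉ B → ∃ e ∈ p.edges, e ∈ G.cutEdges B := by
  intro a c p
  induction p with
  | nil x => intro h1 h2; exact absurd h1 h2
  | @cons a b c e he p ih =>
    intro h1 h2
    by_cases hbB : b ∈ B
    · obtain ⟨e', he', hc⟩ := ih hbB h2
      exact ⟨e', List.mem_cons_of_mem _ he', hc⟩
    · refine ⟨e, List.mem_cons_self, ⟨a, ?_, h1⟩, ⟨b, ?_, hbB⟩⟩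
      · rw [he]; exact Sym2.mem_mk_left _ _
      · rw [he]; exact Sym2.mem_mk_right _ _

lemma hasEDP_le_cut {u v : V} {n : ℕ} (h : G.HasEDP u v n) {B : Set V}
    (hu : u ∈ B) (hv : v ∉ B) : n ≤ (G.cutEdges B).ncard := by
  obtain ⟨P, _, hdisj⟩ := h
  choose f hf1 hf2 using fun i => walk_cross (P i) hu hv
  have hinj : Function.Injective f := by
    intro i j hij
    by_contra hne
    exact hdisj i j hne (f i) (hf1 i) (hij ▸ hf1 j)
  have h1 : (Set.range f).ncard = n := by
    have h2 := Set.ncard_image_of_injective Set.univ hinj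
    rw [Set.image_univ] at h2
    rw [h2, Set.ncard_univ, Nat.card_eq_fintype_card, Fintype.card_fin]
  rw [← h1]
  refine Set.ncard_le_ncard ?_ (Set.toFinite _)
  rintro _ ⟨i, rfl⟩
  exact hf2 i

lemma degree_eq_cut (x : V) : G.degree x = (G.cutEdges ({x} : Set V)).ncard := by
  unfold degree cutEdges
  congr 1
  ext e
  constructor
  · intro hx
    refine ⟨⟨x, hx, rfl⟩, ⟨Sym2.Mem.other hx, Sym2.other_mem hx, ?_⟩⟩
    simp only [Set.mem_singleton_iff]
    exact other_ne hx
  · rintro ⟨⟨y, hy, hyx⟩, _⟩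
    rw [Set.mem_singleton_iff] at hyx
    rw [← hyx]
    exact hy

lemma cutEdges_compl (B : Set V) : G.cutEdges Bᶜ = G.cutEdges B := by
  ext e
  constructor
  · rintro ⟨⟨x, hx1, hx2⟩, ⟨y, hy1, hy2⟩⟩
    rw [Set.mem_compl_iff] at hx2
    rw [Set.notMem_compl_iff] at hy2
    exact ⟨⟨y, hy1, hy2⟩, ⟨x, hx1, hx2⟩⟩
  · rintro ⟨⟨x, hx1, hx2⟩, ⟨y, hy1, hy2⟩⟩
    exact ⟨⟨y, hy1, hy2⟩, ⟨x, hx1, fun h => h hx2⟩⟩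

end MengerAux

/-- **Graphs with only trivial minimum cuts are quasi `k`-regular.**  If `G`
is an exactly `k`-edge-connected multigraph all of whose minimum edge cuts are
trivial (one side is a single vertex), then at most one vertex of `G` has
degree different from `k`. -/
theorem quasiRegular_of_minCuts_trivial {V : Type} (G : Multigraph V) (k : ℕ)
    (hG : G.ExactlyEdgeConnected k)
    (htriv : ∀ A : Set V, G.IsMinCut A → (∃ x : V, A = {x}) ∨ ∃ x : V, Aᶜ = {x}) :
    G.QuasiRegular k := by
  obtain ⟨hnt, hpairs⟩ := hG
  intro u hu v hv
  by_contra huv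
  have hu' : G.degree u ≠ k := hu
  have hv' : G.degree v ≠ k := hv
  have hmenger : ¬ G.HasEDP u v (k + 1) := (hpairs u v huv).2
  have hcutex : ∃ B : Set V, u ∈ B ∧ v ∉ B ∧ (G.cutEdges B).ncard ≤ k := by
    by_contra hc
    push_neg at hc
    exact hmenger (menger huv fun B hB1 hB2 => hc B hB1 hB2)
  obtain ⟨B, huB, hvB, hBk⟩ := hcutex
  have hallk : ∀ C : Set V, C.Nonempty → Cᶜ.Nonempty → k ≤ (G.cutEdges C).ncard := by
    rintro C ⟨a, ha⟩ ⟨b, hb⟩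
    have hab : a ≠ b := fun h => hb (h ▸ ha)
    exact hasEDP_le_cut (hpairs a b hab).1 ha hb
  have hmin : G.IsMinCut B :=
    ⟨⟨u, huB⟩, ⟨v, hvB⟩, fun C hC1 hC2 => hBk.trans (hallk C hC1 hC2)⟩
  have hdegu : k ≤ G.degree u := by
    rw [degree_eq_cut]
    exact hasEDP_le_cut (hpairs u v huv).1 rfl
      (fun h => huv (Set.mem_singleton_iff.mp h).symm)
  have hdegv : k ≤ G.degree v := by
    rw [degree_eq_cut, ← cutEdges_compl]
    exact hasEDP_le_cut (hpairs u v huv).1 huv (fun h => h rfl)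
  rcases htriv B hmin with ⟨x, hx⟩ | ⟨x, hx⟩
  · have hux : u = x := by rw [hx] at huB; exact huB
    rw [← hux] at hx
    rw [hx, ← degree_eq_cut] at hBk
    exact hu' (le_antisymm hBk hdegu)
  · have hvx : v = x := by
      have hvc : v ∈ Bᶜ := hvB
      rw [hx] at hvc; exact hvc
    rw [← hvx] at hx
    have hcut2 : (G.cutEdges B).ncard = G.degree v := by
      rw [degree_eq_cut, ← hx, cutEdges_compl]
    rw [hcut2] at hBk
    exact hv' (le_antisymm hBk hdegv)

end Multigraph
end
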